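/- arXiv:2601.06576 — 12 statements merged into one kernel-verified Lean document; each statement's English description precedes it below -/
import Mathlib

section
/- Let R be a 2-torsion free prime ring with involution * of the second kind, and let a ∈ R. If [x ∘ x*, a] ∈ Z(R) for all x ∈ R, then a ∈ Z(R). -/
theorem stmt3 {R : Type*} [Ring R]
    (hprime : ∀ a b : R, (∀ x : R, a * x * b = 0) → a = 0 ∨ b = 0)
    (htor : ∀ x : R, x + x = 0 → x = 0)
    (st : R → R)
    (hadd : ∀ x y : R, st (x + y) = st x + st y)
    (hmul : ∀ x y : R, st (x * y) = st y * st x)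
    (hinv : ∀ x : R, st (st x) = x)
    (hsecond : ∃ s : R, s ≠ 0 ∧ st s = -s ∧ s ∈ Set.center R)
    (a : R)
    (hyp : ∀ x : R, (x * st x + st x * x) * a - a * (x * st x + st x * x) ∈ Set.center R) :
    a ∈ Set.center R := by
  obtain ⟨s, hs0, hss, hsc⟩ := hsecond
  have hsc' : ∀ y : R, y * s = s * y := fun y => Semigroup.mem_center_iff.mp hsc y
  have hpull : ∀ y z : R, y * (s * z) = s * (y * z) := by
    intro y z; rw [← mul_assoc, hsc', mul_assoc]
  have hyp' : ∀ x r : R, r * ((x * st x + st x * x) * a - a * (x * st x + st x * x))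
      = ((x * st x + st x * x) * a - a * (x * st x + st x * x)) * r :=
    fun x r => Semigroup.mem_center_iff.mp (hyp x) r
  have cancel : ∀ w : R, s * w = 0 → w = 0 := by
    intro w hw
    rcases hprime s w (fun x => by rw [← hsc' x, mul_assoc, hw, mul_zero]) with h | h
    · exact absurd h hs0
    · exact h
  -- Step 1 : [st x - x, a] ∈ Z
  have h1 : ∀ x r : R, ((st x - x) * a - a * (st x - x)) * r
      = r * ((st x - x) * a - a * (st x - x)) := by
    intro x r
    have c1 := hyp' (x + s) r
    rw [hadd, hss] at c1
    have c2 := hyp' x r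
    have key : s * (((st x - x) * a - a * (st x - x)) * r - r * ((st x - x) * a - a * (st x - x)))
        + s * (((st x - x) * a - a * (st x - x)) * r - r * ((st x - x) * a - a * (st x - x)))
        = 0 := by
      linear_combination (norm := (simp only [mul_add, add_mul, mul_sub, sub_mul, mul_assoc,
        mul_neg, neg_mul, hsc', hpull]; abel)) c2 - c1
    exact sub_eq_zero.mp (cancel _ (htor _ key))
  -- Step 2 : [st x + x, a] ∈ Z
  have h2 : ∀ x r : R, ((st x + x) * a - a * (st x + x)) * r
      = r * ((st x + x) * a - a * (st x + x)) := by
    intro x r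
    have c := h1 (s * x) r
    rw [hmul, hss] at c
    have key : s * (((st x + x) * a - a * (st x + x)) * r - r * ((st x + x) * a - a * (st x + x)))
        = 0 := by
      linear_combination (norm := (simp only [mul_add, add_mul, mul_sub, sub_mul, mul_assoc,
        mul_neg, neg_mul, hsc', hpull]; abel)) - c
    exact sub_eq_zero.mp (cancel _ key)
  -- Step 3 : [x, a] ∈ Z for all x
  have h3 : ∀ x r : R, (x * a - a * x) * r = r * (x * a - a * x) := by
    intro x r
    have c1 := h1 (st x) r
    have c2 := h2 (st x) r
    rw [hinv] at c1 c2
    have key : ((x * a - a * x) * r - r * (x * a - a * x))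
        + ((x * a - a * x) * r - r * (x * a - a * x)) = 0 := by
      linear_combination (norm := noncomm_ring) c1 + c2
    exact sub_eq_zero.mp (htor _ key)
  -- Step 4 : [x,a][a,r] = 0
  have h4 : ∀ x r : R, (x * a - a * x) * (a * r - r * a) = 0 := by
    intro x r
    have e1 := h3 (x * a) r
    have e2 := congrArg (· * a) (h3 x r)
    linear_combination (norm := noncomm_ring) e1 - e2
  -- Finish
  rw [Semigroup.mem_center_iff]
  intro r
  have hcc : (r * a - a * r) * (r * a - a * r) = 0 := by
    have h := h4 r r
    calc (r * a - a * r) * (r * a - a * r)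
        = -((r * a - a * r) * (a * r - r * a)) := by noncomm_ring
      _ = 0 := by rw [h, neg_zero]
  rcases hprime (r * a - a * r) (r * a - a * r) (fun x => by
      rw [h3 r x, mul_assoc, hcc, mul_zero]) with h | h <;>
    exact sub_eq_zero.mp h
end

section
/- Let R be a 2-torsion free prime ring with involution * of the second kind. If xx* ∈ Z(R) for all x ∈ R, then R is commutative. -/
theorem stmt4 {R : Type*} [Ring R]
    (hprime : ∀ a b : R, (∀ x : R, a * x * b = 0) → a = 0 ∨ b = 0)
    (htor : ∀ x : R, x + x = 0 → x = 0)
    (st : R → R)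
    (hadd : ∀ x y : R, st (x + y) = st x + st y)
    (hmul : ∀ x y : R, st (x * y) = st y * st x)
    (hinv : ∀ x : R, st (st x) = x)
    (hsecond : ∃ s : R, s ≠ 0 ∧ st s = -s ∧ s ∈ Set.center R)
    (hyp : ∀ x : R, x * st x ∈ Set.center R) :
    ∀ x y : R, x * y = y * x := by
  obtain ⟨s, hs0, hss, hsc⟩ := hsecond
  rw [Semigroup.mem_center_iff] at hsc
  have hC : ∀ x g : R, g * (x * st x) = (x * st x) * g := by
    intro x
    have := hyp x
    rw [Semigroup.mem_center_iff] at this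
    exact this
  -- linearization: x * st y + y * st x is central
  have hlin : ∀ x y g : R, g * (x * st y + y * st x) = (x * st y + y * st x) * g := by
    intro x y g
    have h1 := hC (x + y) g
    have h2 := hC x g
    have h3 := hC y g
    rw [hadd] at h1
    linear_combination (norm := noncomm_ring) h1 - h2 - h3
  -- substituting y * s for y:  s*(y*st x) - s*(x*st y) is central
  have hlin2 : ∀ x y g : R, g * (s * (y * st x) - s * (x * st y)) =
      (s * (y * st x) - s * (x * st y)) * g := by
    intro x y g
    have h1 := hlin x (y * s) g
    rw [hmul, hss] at h1
    have e : x * (-s * st y) + y * s * st x = s * (y * st x) - s * (x * st y) := by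
      have e1 : x * s = s * x := hsc x
      have e2 : y * s = s * y := hsc y
      linear_combination (norm := noncomm_ring) (-(e1 * st y)) + e2 * st x
    rw [e] at h1
    exact h1
  -- multiplying the linearization by the central s
  have hlin3 : ∀ x y g : R, g * (s * (y * st x) + s * (x * st y)) =
      (s * (y * st x) + s * (x * st y)) * g := by
    intro x y g
    have h1 := hlin x y g
    have e1 : g * s = s * g := hsc g
    linear_combination (norm := noncomm_ring) s * h1 + e1 * (x * st y + y * st x)
  -- hence s * (y * x) is central for all x, y
  have hkey : ∀ x y g : R, g * (s * (y * x)) = (s * (y * x)) * g := by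
    intro x y g
    have h2 := hlin2 (st x) y g
    have h3 := hlin3 (st x) y g
    rw [hinv] at h2 h3
    have hsum : (g * (s * (y * x)) - (s * (y * x)) * g)
        + (g * (s * (y * x)) - (s * (y * x)) * g) = 0 := by
      linear_combination (norm := noncomm_ring) h2 + h3
    have := htor _ hsum
    linear_combination (norm := noncomm_ring) this
  -- conclude commutativity via primeness
  intro x y
  have hc : ∀ r : R, s * r * (x * y - y * x) = 0 := by
    intro r
    have h1 := hkey y (r * x) s  -- need s*(r*x*y) central; instead use generic g
    -- s * (x * y) is central: take y := 1 in hkey? use hkey directly: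
    have h2 := hkey y x r        -- r * (s*(x*y)) = (s*(x*y)) * r
    have h3 := hkey x y r        -- r * (s*(y*x)) = (s*(y*x)) * r
    -- s*(x*y)*r = r*s*(x*y) = s*r*(x*y)? need s central
    have e1 : r * s = s * r := hsc r
    -- s*r*(x*y) = r*(s*(x*y)) = (s*(x*y))*r  and similarly for y*x
    -- also (s*(x*y))*r - (s*(y*x))*r = s*((x*y - y*x))*r, and
    -- r*(s*(x*y)) - r*(s*(y*x)) = r*s*(x*y - y*x)
    have h4 := hkey y r x        -- x * (s*(r*y)) = (s*(r*y)) * x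
    -- (s*(r*y))*x = s*r*(y*x); x*(s*(r*y)) = ?
    -- alternative: from h2: r*(s*(x*y)) = s*(x*y)*r, so s*(r'*(x*y)) central too.
    -- Take h5 := hkey (x*y) 1 ... simpler: hkey gives s*(y*x) central for ALL x y.
    have h5 := hkey (x * y) r s   -- s * (s*(r*(x*y))) = (s*(r*(x*y))) * s  (not needed)
    -- Direct route: s*x central? take y := 1 in hkey: s * (1 * x) = s * x central.
    have h6 := hkey x 1 y         -- y * (s * (1 * x)) = (s * (1 * x)) * y
    rw [one_mul] at h6            -- y * (s * x) = (s * x) * y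
    -- so s*x*y = y*s*x = s*y*x (s central), hence s*(x*y - y*x) = 0
    have e2 : y * s = s * y := hsc y
    have e0 : s * (x * y - y * x) = 0 := by
      linear_combination (norm := noncomm_ring) - h6 + e2 * x
    -- then s * r * (x*y - y*x) = r * s * (x*y-y*x) = 0
    calc s * r * (x * y - y * x) = r * s * (x * y - y * x) := by rw [e1]
      _ = r * (s * (x * y - y * x)) := by noncomm_ring
      _ = r * 0 := by rw [e0]
      _ = 0 := by rw [mul_zero]
  rcases hprime s (x * y - y * x) hc with h | h
  · exact absurd h hs0
  · linear_combination (norm := noncomm_ring) h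
end

section
/- Let R be a 2-torsion free prime ring with involution * of the second kind, admitting ring endomorphisms g₁, g₂ (each not equal to the identity map) such that g₁(x)g₂(x*) - xx* ∈ Z(R) for all x ∈ R. Then either R is commutative, or both g₁(Z(R)) ⊆ Z(R) and g₂(Z(R)) ⊆ Z(R). -/
namespace Stmt5Aux

variable {R : Type*} [Ring R]

/-- `t` commutes with everything. -/
def IsCen (t : R) : Prop := ∀ r : R, r * t = t * r

theorem isCen_congr {a b : R} (h : IsCen a) (e : a = b) : IsCen b := e ▸ h

theorem IsCen.add {a b : R} (ha : IsCen a) (hb : IsCen b) : IsCen (a + b) := by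
  intro r; rw [mul_add, add_mul, ha r, hb r]

theorem IsCen.neg {a : R} (ha : IsCen a) : IsCen (-a) := by
  intro r; rw [mul_neg, neg_mul, ha r]

theorem IsCen.sub {a b : R} (ha : IsCen a) (hb : IsCen b) : IsCen (a - b) := by
  intro r; rw [mul_sub, sub_mul, ha r, hb r]

theorem IsCen.mul {a b : R} (ha : IsCen a) (hb : IsCen b) : IsCen (a * b) := by
  intro r
  calc r * (a * b) = r * a * b := (mul_assoc ..).symm
    _ = a * r * b := by rw [ha r]
    _ = a * (r * b) := mul_assoc ..
    _ = a * (b * r) := by rw [hb r]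
    _ = a * b * r := (mul_assoc ..).symm

theorem key_helper (A B T σ ss c ξ : R)
    (h1 : A * ss = ss * A) (h2 : A * c = c * A)
    (h3 : A * B * ss = ss * (A * B)) (h4 : A * B * c = c * (A * B))
    (h5 : A * ξ = ξ * A) (h6 : A * B * ξ = ξ * (A * B))
    (h7 : c * T = ss * σ - ξ)
    (hδ : IsCen (A * (T * B) - A * B * T)) (hc : IsCen c) :
    IsCen (ss * (A * (σ * B) - A * B * σ)) := by
  have k1 : c * (A * (T * B)) = A * ((c * T) * B) := by
    rw [← mul_assoc c A, ← h2, mul_assoc A c, ← mul_assoc c T]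
  have k2 : c * (A * B * T) = A * B * (c * T) := by
    rw [← mul_assoc c (A*B) T, ← h4, mul_assoc (A*B) c T]
  have k3 : A * ((ss * σ - ξ) * B) = ss * (A * (σ * B)) - ξ * (A * B) := by
    rw [sub_mul, mul_sub, ← mul_assoc A (ss*σ) B, ← mul_assoc A ss σ, h1,
        ← mul_assoc A ξ B, h5]
    noncomm_ring
  have k4 : A * B * (ss * σ - ξ) = ss * (A * B * σ) - ξ * (A * B) := by
    rw [mul_sub, ← mul_assoc (A*B) ss σ, h3, h6]
    noncomm_ring
  have e : c * (A * (T * B) - A * B * T) = ss * (A * (σ * B) - A * B * σ) := by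
    rw [mul_sub, k1, k2, h7, k3, k4]
    noncomm_ring
  exact isCen_congr (hc.mul hδ) e

end Stmt5Aux

open Stmt5Aux in
theorem stmt5 {R : Type*} [Ring R]
    (hprime : ∀ a b : R, (∀ x : R, a * x * b = 0) → a = 0 ∨ b = 0)
    (htor : ∀ x : R, x + x = 0 → x = 0)
    (st : R → R)
    (hadd : ∀ x y : R, st (x + y) = st x + st y)
    (hmul : ∀ x y : R, st (x * y) = st y * st x)
    (hinv : ∀ x : R, st (st x) = x)
    (hsecond : ∃ s : R, s ≠ 0 ∧ st s = -s ∧ s ∈ Set.center R)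
    (g₁ g₂ : R →+* R)
    (hg₁ : g₁ ≠ RingHom.id R)
    (hg₂ : g₂ ≠ RingHom.id R)
    (hyp : ∀ x : R, g₁ x * g₂ (st x) - x * st x ∈ Set.center R) :
    (∀ x y : R, x * y = y * x) ∨
      ((∀ z : R, z ∈ Set.center R → g₁ z ∈ Set.center R) ∧
        (∀ z : R, z ∈ Set.center R → g₂ z ∈ Set.center R)) := by
  obtain ⟨s, hs0, hss, hsc⟩ := hsecond
  have hsZ : IsCen s := Semigroup.mem_center_iff.mp hsc
  -- st of a central element is central
  have hstZ : ∀ z : R, IsCen z → IsCen (st z) := by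
    intro z hz r
    calc r * st z = st (st r) * st z := by rw [hinv]
      _ = st (z * st r) := (hmul z (st r)).symm
      _ = st (st r * z) := by rw [hz (st r)]
      _ = st z * st (st r) := hmul (st r) z
      _ = st z * r := by rw [hinv]
  have ht2 : IsCen (s * s) := hsZ.mul hsZ
  have ht2ne : s * s ≠ 0 := by
    intro h
    rcases hprime s s (fun x => by
      calc s * x * s = s * (x * s) := mul_assoc ..
        _ = s * (s * x) := by rw [hsZ x]
        _ = s * s * x := (mul_assoc ..).symm
        _ = 0 := by rw [h, zero_mul]) with h1 | h1 <;> exact hs0 h1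
  -- "division" by a nonzero central element
  have hdiv : ∀ q : R, IsCen q → q ≠ 0 → ∀ t : R, IsCen (q * t) → IsCen t := by
    intro q hq hqne t hqt r
    have key : ∀ x : R, q * x * (r * t - t * r) = 0 := by
      intro x
      have h1 : q * (r * t) = q * (t * r) := by
        calc q * (r * t) = q * r * t := (mul_assoc ..).symm
          _ = r * q * t := by rw [hq r]
          _ = r * (q * t) := mul_assoc ..
          _ = q * t * r := hqt r
          _ = q * (t * r) := mul_assoc ..
      calc q * x * (r * t - t * r) = x * q * (r * t - t * r) := by rw [hq x]
        _ = x * (q * (r * t - t * r)) := mul_assoc ..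
        _ = x * (q * (r * t) - q * (t * r)) := by rw [mul_sub]
        _ = 0 := by rw [h1, sub_self, mul_zero]
    rcases hprime q (r * t - t * r) key with h | h
    · exact absurd h hqne
    · exact sub_eq_zero.mp h
  -- 2-torsion-freeness for centrality
  have hhalf : ∀ t : R, IsCen (t + t) → IsCen t := by
    intro t h r
    have h2 : (r * t - t * r) + (r * t - t * r) = 0 := by
      have h3 := h r
      rw [mul_add, add_mul] at h3
      rw [sub_add_sub_comm, h3, sub_self]
    exact sub_eq_zero.mp (htor _ h2)
  have hE : ∀ x : R, IsCen (g₁ x * g₂ (st x) - x * st x) :=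
    fun x => Semigroup.mem_center_iff.mp (hyp x)
  -- linearized identity
  have hF : ∀ u v : R, IsCen (g₁ u * g₂ (st v) + g₁ v * g₂ (st u) - u * st v - v * st u) := by
    intro u v
    have h := ((hE (u + v)).sub (hE u)).sub (hE v)
    apply isCen_congr h
    rw [hadd u v]
    simp only [map_add]
    noncomm_ring
  -- c := g₁ s * g₂ s is central
  have hcZ : IsCen (g₁ s * g₂ s) := by
    have h := hE s
    rw [hss] at h
    simp only [map_neg, mul_neg, sub_neg_eq_add] at h
    apply isCen_congr ((h.sub ht2).neg)
    noncomm_ring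
  -- identity (8): s²(x + x*) - c(g₁x + g₂x*) ∈ Z
  have h8 : ∀ x : R, IsCen (s * s * (x + st x) - g₁ s * g₂ s * (g₁ x + g₂ (st x))) := by
    intro x
    have h := hF (x * s) s
    rw [show st (x * s) = -(s * st x) from by rw [hmul, hss, neg_mul], hss] at h
    simp only [map_mul, map_neg, mul_neg, neg_mul, sub_neg_eq_add] at h
    apply isCen_congr h
    rw [show g₁ x * g₁ s * g₂ s = g₁ s * g₂ s * g₁ x from by
          rw [mul_assoc]; exact hcZ (g₁ x),
        show x * s * s = s * s * x from by rw [mul_assoc]; exact ht2 x]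
    noncomm_ring
  by_cases hc : g₁ s * g₂ s = 0
  · -- c = 0 : R is commutative
    left
    have h1 : ∀ x : R, IsCen (x + st x) := by
      intro x
      have h := h8 x
      rw [hc, zero_mul, sub_zero] at h
      exact hdiv (s * s) ht2 ht2ne _ h
    have h2 : ∀ x : R, IsCen (x - st x) := by
      intro x
      have h := h1 (x * s)
      rw [show st (x * s) = -(s * st x) from by rw [hmul, hss, neg_mul]] at h
      have h' : IsCen (s * (x - st x)) := by
        apply isCen_congr h
        rw [hsZ x]
        noncomm_ring
      exact hdiv s hsZ hs0 _ h'
    intro x y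
    have hy : IsCen y := by
      apply hhalf
      apply isCen_congr ((h1 y).add (h2 y))
      noncomm_ring
    exact hy x
  · -- c ≠ 0 : g₁ and g₂ preserve the center
    right
    have main : ∀ z : R, IsCen z → IsCen (g₁ z) ∧ IsCen (g₂ (st z)) := by
      intro z hz
      have hzst := hstZ z hz
      have hν : IsCen (z * st z) := hz.mul hzst
      have hμ : IsCen (g₁ z * g₂ (st z)) := by
        have h := (hE z).add hν
        apply isCen_congr h
        noncomm_ring
      have hk : IsCen (g₁ z + g₂ (st z)) := by
        have h0 := (ht2.mul (hz.add hzst)).sub (h8 z)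
        have h2 : IsCen (g₁ s * g₂ s * (g₁ z + g₂ (st z))) := by
          apply isCen_congr h0
          noncomm_ring
        exact hdiv _ hcZ hc _ h2
      have hZ1 : ∀ x : R, IsCen (g₁ z * g₂ (st z) * (g₁ x + g₂ (st x))
          - z * st z * (x + st x)) := by
        intro x
        have h := hF (x * z) z
        rw [show st (x * z) = st z * st x from hmul x z] at h
        simp only [map_mul] at h
        apply isCen_congr h
        rw [show g₁ x * g₁ z * g₂ (st z) = g₁ z * g₂ (st z) * g₁ x from by
              rw [mul_assoc]; exact hμ (g₁ x),
            show x * z * st z = z * st z * x from by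
              rw [hz x, mul_assoc, hzst x, ← mul_assoc]]
        noncomm_ring
      have hZ2 : ∀ x : R, IsCen (g₁ z * ((g₁ x + g₂ (st x)) * g₂ (st z))
          - z * st z * (x + st x)) := by
        intro x
        have h := hF (z * x) z
        rw [show st (z * x) = st x * st z from hmul z x] at h
        simp only [map_mul] at h
        apply isCen_congr h
        rw [show z * x * st z = z * st z * x from by
              rw [mul_assoc, hzst x, ← mul_assoc],
            show z * (st x * st z) = z * st z * st x from by
              rw [hzst (st x), ← mul_assoc]]
        noncomm_ring
      have hW : ∀ x : R, IsCen (g₁ z * ((x + st x) * g₂ (st z))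
          - g₁ z * g₂ (st z) * (x + st x)) := by
        intro x
        have hδx : IsCen (g₁ z * ((g₁ x + g₂ (st x)) * g₂ (st z))
            - g₁ z * g₂ (st z) * (g₁ x + g₂ (st x))) := by
          apply isCen_congr ((hZ2 x).sub (hZ1 x))
          noncomm_ring
        have hk' := key_helper (g₁ z) (g₂ (st z)) (g₁ x + g₂ (st x)) (x + st x)
            (s * s) (g₁ s * g₂ s)
            (s * s * (x + st x) - g₁ s * g₂ s * (g₁ x + g₂ (st x)))
            (ht2 _) (hcZ _) (ht2 _) (hcZ _) ((h8 x) _) ((h8 x) _)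
            (by noncomm_ring) hδx hcZ
        exact hdiv (s * s) ht2 ht2ne _ hk'
      have hW2 : ∀ x : R, IsCen (g₁ z * ((x - st x) * g₂ (st z))
          - g₁ z * g₂ (st z) * (x - st x)) := by
        intro x
        have h := hW (x * s)
        rw [show st (x * s) = -(s * st x) from by rw [hmul, hss, neg_mul]] at h
        have h' : IsCen (s * (g₁ z * ((x - st x) * g₂ (st z))
            - g₁ z * g₂ (st z) * (x - st x))) := by
          apply isCen_congr h
          rw [hsZ x]
          have e1 : g₁ z * ((s * x + -(s * st x)) * g₂ (st z))
              = s * (g₁ z * ((x - st x) * g₂ (st z))) := by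
            calc g₁ z * ((s * x + -(s * st x)) * g₂ (st z))
                = g₁ z * s * ((x - st x) * g₂ (st z)) := by noncomm_ring
              _ = s * g₁ z * ((x - st x) * g₂ (st z)) := by rw [hsZ (g₁ z)]
              _ = s * (g₁ z * ((x - st x) * g₂ (st z))) := by rw [mul_assoc]
          have e2 : g₁ z * g₂ (st z) * (s * x + -(s * st x))
              = s * (g₁ z * g₂ (st z) * (x - st x)) := by
            calc g₁ z * g₂ (st z) * (s * x + -(s * st x))
                = g₁ z * g₂ (st z) * s * (x - st x) := by noncomm_ring
              _ = s * (g₁ z * g₂ (st z)) * (x - st x) := by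
                  rw [hsZ (g₁ z * g₂ (st z))]
              _ = s * (g₁ z * g₂ (st z) * (x - st x)) := by noncomm_ring
          rw [e1, e2]
          noncomm_ring
        exact hdiv s hsZ hs0 _ h'
      have hq : ∀ x : R, IsCen (g₁ z * (x * g₂ (st z)) - g₁ z * g₂ (st z) * x) := by
        intro x
        apply hhalf
        apply isCen_congr ((hW x).add (hW2 x))
        noncomm_ring
      have hAq : ∀ x : R, IsCen (g₁ z * (x * g₁ z) - g₁ z * (g₁ z * x)) := by
        intro x
        have e3 : (g₁ z * (x * g₁ z) - g₁ z * (g₁ z * x)) +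
            (g₁ z * (x * g₂ (st z)) - g₁ z * g₂ (st z) * x) = 0 := by
          calc (g₁ z * (x * g₁ z) - g₁ z * (g₁ z * x)) +
              (g₁ z * (x * g₂ (st z)) - g₁ z * g₂ (st z) * x)
              = g₁ z * (x * (g₁ z + g₂ (st z)) - (g₁ z + g₂ (st z)) * x) := by
                noncomm_ring
            _ = 0 := by rw [hk x, sub_self, mul_zero]
        have e4 : -(g₁ z * (x * g₂ (st z)) - g₁ z * g₂ (st z) * x)
            = g₁ z * (x * g₁ z) - g₁ z * (g₁ z * x) := by
          rw [neg_eq_iff_add_eq_zero, add_comm]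
          exact e3
        exact isCen_congr ((hq x).neg) e4
      have hAcen : IsCen (g₁ z) := by
        by_cases h0 : ∀ y : R, g₁ z * (y * g₁ z) - g₁ z * (g₁ z * y) = 0
        · by_cases hA0 : g₁ z = 0
          · intro r; rw [hA0, mul_zero, zero_mul]
          · intro r
            have hzero : ∀ y : R, g₁ z * y * (r * g₁ z - g₁ z * r) = 0 := by
              intro y
              have hyx := sub_eq_zero.mp (h0 (y * r))
              have hy := sub_eq_zero.mp (h0 y)
              calc g₁ z * y * (r * g₁ z - g₁ z * r)
                  = g₁ z * ((y * r) * g₁ z) - g₁ z * (y * g₁ z) * r := by noncomm_ring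
                _ = g₁ z * (g₁ z * (y * r)) - g₁ z * (g₁ z * y) * r := by rw [hyx, hy]
                _ = 0 := by noncomm_ring
            rcases hprime (g₁ z) (r * g₁ z - g₁ z * r) hzero with h | h
            · exact absurd h hA0
            · exact sub_eq_zero.mp h
        · push_neg at h0
          obtain ⟨y, hy⟩ := h0
          have hkc := hAq y
          have h2 := hAq (g₁ z * y)
          have h3 : IsCen ((g₁ z * (y * g₁ z) - g₁ z * (g₁ z * y)) * g₁ z) := by
            apply isCen_congr h2
            rw [← hkc (g₁ z)]
            noncomm_ring
          exact hdiv _ hkc hy _ h3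
      have hBcen : IsCen (g₂ (st z)) := by
        apply isCen_congr (hk.sub hAcen)
        noncomm_ring
      exact ⟨hAcen, hBcen⟩
    constructor
    · intro z hz
      exact Semigroup.mem_center_iff.mpr ((main z (Semigroup.mem_center_iff.mp hz)).1)
    · intro z hz
      have hzc : IsCen z := Semigroup.mem_center_iff.mp hz
      have h := (main (st z) (hstZ z hzc)).2
      rw [hinv] at h
      exact Semigroup.mem_center_iff.mpr h
end

section
/- Let R be a 2-torsion free prime ring with involution * of the second kind, admitting ring endomorphisms g₁, g₂ (each not equal to the identity map) such that g₁(x)g₂(x*) + xx* ∈ Z(R) for all x ∈ R. Then either R is commutative, or both g₁(Z(R)) ⊆ Z(R) and g₂(Z(R)) ⊆ Z(R). -/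
theorem stmt6 {R : Type*} [Ring R]
    (hprime : ∀ a b : R, (∀ x : R, a * x * b = 0) → a = 0 ∨ b = 0)
    (htor : ∀ x : R, x + x = 0 → x = 0)
    (st : R → R)
    (hadd : ∀ x y : R, st (x + y) = st x + st y)
    (hmul : ∀ x y : R, st (x * y) = st y * st x)
    (hinv : ∀ x : R, st (st x) = x)
    (hsecond : ∃ s : R, s ≠ 0 ∧ st s = -s ∧ s ∈ Set.center R)
    (g₁ g₂ : R →+* R)
    (hg₁ : g₁ ≠ RingHom.id R)
    (hg₂ : g₂ ≠ RingHom.id R)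
    (hyp : ∀ x : R, g₁ x * g₂ (st x) + x * st x ∈ Set.center R) :
    (∀ x y : R, x * y = y * x) ∨
      ((∀ z : R, z ∈ Set.center R → g₁ z ∈ Set.center R) ∧
        (∀ z : R, z ∈ Set.center R → g₂ z ∈ Set.center R)) := by
  classical
  obtain ⟨s, hs0, hss, hsZ⟩ := hsecond
  have hZ : ∀ c : R, c ∈ Set.center R ↔ ∀ g : R, g * c = c * g :=
    fun c => Semigroup.mem_center_iff
  have hc : ∀ {c : R}, c ∈ Set.center R → ∀ g : R, g * c = c * g :=
    fun h => (hZ _).1 h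
  have hcm : ∀ {c : R}, (∀ g : R, g * c = c * g) → c ∈ Set.center R :=
    fun h => (hZ _).2 h
  have hZadd : ∀ {c d : R}, c ∈ Set.center R → d ∈ Set.center R →
      c + d ∈ Set.center R := by
    intro c d h1 h2; exact hcm fun g => by rw [mul_add, add_mul, hc h1, hc h2]
  have hZneg : ∀ {c : R}, c ∈ Set.center R → -c ∈ Set.center R := by
    intro c h1; exact hcm fun g => by rw [mul_neg, neg_mul, hc h1]
  have hZsub : ∀ {c d : R}, c ∈ Set.center R → d ∈ Set.center R →
      c - d ∈ Set.center R := by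
    intro c d h1 h2; exact hcm fun g => by rw [mul_sub, sub_mul, hc h1, hc h2]
  have hZmul : ∀ {c d : R}, c ∈ Set.center R → d ∈ Set.center R →
      c * d ∈ Set.center R := by
    intro c d h1 h2
    exact hcm fun g => by rw [← mul_assoc, hc h1, mul_assoc, hc h2, mul_assoc]
  have hswap : ∀ (c x y : R), c ∈ Set.center R → x * (c * y) = c * (x * y) := by
    intro c x y h1; rw [← mul_assoc, ← mul_assoc, hc h1 x]
  have htor2 : ∀ {c : R}, c + c ∈ Set.center R → c ∈ Set.center R := by
    intro c h1
    refine hcm fun g => ?_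
    have h2 := hc h1 g
    have h3 : (g * c - c * g) + (g * c - c * g) = g * (c + c) - (c + c) * g := by
      noncomm_ring
    rw [h2, sub_self] at h3
    have h4 := htor _ h3
    rw [sub_eq_zero] at h4
    exact h4
  have hcancel : ∀ (μ c : R), μ ∈ Set.center R → μ ≠ 0 →
      μ * c ∈ Set.center R → c ∈ Set.center R := by
    intro μ c hμ hμ0 hμc
    refine hcm fun g => ?_
    have h2 : μ * (c * g - g * c) = 0 := by
      have h3 := hc hμc g
      have h4 := hc hμ g
      calc μ * (c * g - g * c) = (μ * c) * g - g * (μ * c) + (g * μ - μ * g) * c := by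
            noncomm_ring
        _ = 0 := by rw [← h3, h4]; noncomm_ring
    have h1 : ∀ x : R, μ * x * (c * g - g * c) = 0 := by
      intro x
      rw [← hc hμ x, mul_assoc, h2, mul_zero]
    rcases hprime μ (c * g - g * c) h1 with h | h
    · exact absurd h hμ0
    · exact (sub_eq_zero.mp h).symm
  have hst0 : st 0 = 0 := by
    have h1 := hadd 0 0
    rw [add_zero] at h1
    exact (left_eq_add.mp h1)
  have hst1 : st 1 = 1 := by
    have h1 := hmul (st 1) 1
    rw [mul_one, hinv, mul_one] at h1
    exact h1.symm
  have hstZ : ∀ {z : R}, z ∈ Set.center R → st z ∈ Set.center R := by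
    intro z hz
    refine hcm fun g => ?_
    calc g * st z = st (st g) * st z := by rw [hinv]
      _ = st (z * st g) := (hmul z (st g)).symm
      _ = st (st g * z) := by rw [← hc hz (st g)]
      _ = st z * st (st g) := hmul (st g) z
      _ = st z * g := by rw [hinv]
  have hs2Z : s * s ∈ Set.center R := hZmul hsZ hsZ
  have hs2ne : s * s ≠ 0 := by
    intro h
    apply hs0
    have hx : ∀ x : R, s * x * s = 0 := by
      intro x
      rw [mul_assoc, hc hsZ x, ← mul_assoc, h, zero_mul]
    exact (hprime s s hx).elim id id
  have hEs : g₁ s * g₂ s + s * s ∈ Set.center R := by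
    have h1 := hyp s
    rw [hss, map_neg, mul_neg, mul_neg] at h1
    have h2 := hZneg h1
    rw [neg_add, neg_neg, neg_neg] at h2
    exact h2
  have hEZ : g₁ s * g₂ s ∈ Set.center R := by
    have h1 := hZsub hEs hs2Z
    rw [add_sub_cancel_right] at h1
    exact h1
  by_cases hlam : g₁ s * g₂ s - s * s = 0
  · -- Branch B : g₁ s * g₂ s = s * s, prove the right disjunct
    have hE0 : g₁ s * g₂ s ≠ 0 := by
      rw [sub_eq_zero.mp hlam]; exact hs2ne
    right
    have key : ∀ z ∈ Set.center R, g₁ z ∈ Set.center R ∧ g₂ (st z) ∈ Set.center R := by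
      intro z hz
      have hz' : st z ∈ Set.center R := hstZ hz
      -- B1 : g₁ z * g₂ (st z) ∈ Z
      have hB1raw := hyp (z * s)
      simp only [map_mul, hmul, hss, map_neg] at hB1raw
      have hB1t2 : z * s * (-s * st z) ∈ Set.center R :=
        hZmul (hZmul hz hsZ) (hZmul (hZneg hsZ) hz')
      have hB1 : g₁ s * g₂ s * (g₁ z * g₂ (st z)) ∈ Set.center R := by
        have h1 := hZneg (hZsub hB1raw hB1t2)
        rw [show -(g₁ z * g₁ s * (-g₂ s * g₂ (st z)) + z * s * (-s * st z)
              - z * s * (-s * st z))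
            = g₁ z * (g₁ s * g₂ s * g₂ (st z)) from by noncomm_ring] at h1
        rw [hswap (g₁ s * g₂ s) (g₁ z) (g₂ (st z)) hEZ] at h1
        exact h1
      have hB1' : g₁ z * g₂ (st z) ∈ Set.center R := hcancel _ _ hEZ hE0 hB1
      -- B2 : g₁ z + g₂ (st z) ∈ Z
      have hB2raw := hyp (s + z * s)
      simp only [map_add, map_mul, hadd, hmul, hss, map_neg] at hB2raw
      have ht2 : (s + z * s) * (-s + -s * st z) ∈ Set.center R :=
        hZmul (hZadd hsZ (hZmul hz hsZ))
          (hZadd (hZneg hsZ) (hZmul (hZneg hsZ) hz'))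
      have hab : g₁ z + g₂ (st z) ∈ Set.center R := by
        have h1 := hZneg (hZsub hB2raw ht2)
        rw [show -((g₁ s + g₁ z * g₁ s) * (-g₂ s + -g₂ s * g₂ (st z))
              + (s + z * s) * (-s + -s * st z) - (s + z * s) * (-s + -s * st z))
            = g₁ s * g₂ s + g₁ s * g₂ s * g₂ (st z) + g₁ z * (g₁ s * g₂ s)
              + g₁ z * (g₁ s * g₂ s * g₂ (st z)) from by noncomm_ring] at h1
        rw [hc hEZ (g₁ z), hswap (g₁ s * g₂ s) (g₁ z) (g₂ (st z)) hEZ] at h1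
        have h2 := hZsub (hZsub h1 hEZ) (hZmul hEZ hB1')
        rw [show g₁ s * g₂ s + g₁ s * g₂ s * g₂ (st z) + g₁ s * g₂ s * g₁ z
              + g₁ s * g₂ s * (g₁ z * g₂ (st z)) - g₁ s * g₂ s
              - g₁ s * g₂ s * (g₁ z * g₂ (st z))
            = g₁ s * g₂ s * (g₁ z + g₂ (st z)) from by noncomm_ring] at h2
        exact hcancel _ _ hEZ hE0 h2
      -- X1
      have hX1 : ∀ t : R, g₁ z * g₁ t * (g₂ (st t) * g₂ (st z))
          + z * t * (st t * st z) ∈ Set.center R := by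
        intro t
        have h1 := hyp (z * t)
        simp only [map_mul, hmul] at h1
        exact h1
      -- Y1
      have hY1 : ∀ t : R, g₁ z * (g₁ t * g₂ (st t)) + (g₁ t * g₂ (st t)) * g₂ (st z)
          - z * (g₁ t * g₂ (st t)) - (g₁ t * g₂ (st t)) * st z ∈ Set.center R := by
        intro t
        have h1 := hyp (t + z * t)
        simp only [map_add, map_mul, hadd, hmul] at h1
        have h2 := hZsub (hZsub (hZsub (hZsub h1 (hyp t)) (hX1 t))
          (hZmul hz (hyp t))) (hZmul (hyp t) hz')
        rw [show (g₁ t + g₁ z * g₁ t) * (g₂ (st t) + g₂ (st t) * g₂ (st z))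
              + (t + z * t) * (st t + st t * st z)
              - (g₁ t * g₂ (st t) + t * st t)
              - (g₁ z * g₁ t * (g₂ (st t) * g₂ (st z)) + z * t * (st t * st z))
              - z * (g₁ t * g₂ (st t) + t * st t)
              - (g₁ t * g₂ (st t) + t * st t) * st z
            = g₁ z * (g₁ t * g₂ (st t)) + (g₁ t * g₂ (st t)) * g₂ (st z)
              - z * (g₁ t * g₂ (st t)) - (g₁ t * g₂ (st t)) * st z from by
          noncomm_ring] at h2
        exact h2
      -- Y1'
      have hY1' : ∀ t : R, g₁ z * (t * st t) + (t * st t) * g₂ (st z)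
          - z * (t * st t) - (t * st t) * st z ∈ Set.center R := by
        intro t
        have hct := hyp t
        have h1 : g₁ z * (g₁ t * g₂ (st t) + t * st t)
            + (g₁ t * g₂ (st t) + t * st t) * g₂ (st z)
            - z * (g₁ t * g₂ (st t) + t * st t)
            - (g₁ t * g₂ (st t) + t * st t) * st z ∈ Set.center R := by
          rw [hc hct (g₁ z)]
          rw [show (g₁ t * g₂ (st t) + t * st t) * g₁ z
                + (g₁ t * g₂ (st t) + t * st t) * g₂ (st z)
                - z * (g₁ t * g₂ (st t) + t * st t)
                - (g₁ t * g₂ (st t) + t * st t) * st z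
              = (g₁ t * g₂ (st t) + t * st t) * (g₁ z + g₂ (st z))
                - (z * (g₁ t * g₂ (st t) + t * st t)
                  + (g₁ t * g₂ (st t) + t * st t) * st z) from by noncomm_ring]
          exact hZsub (hZmul hct hab) (hZadd (hZmul hz hct) (hZmul hct hz'))
        have h2 := hZsub h1 (hY1 t)
        rw [show g₁ z * (g₁ t * g₂ (st t) + t * st t)
              + (g₁ t * g₂ (st t) + t * st t) * g₂ (st z)
              - z * (g₁ t * g₂ (st t) + t * st t)
              - (g₁ t * g₂ (st t) + t * st t) * st z
              - (g₁ z * (g₁ t * g₂ (st t)) + (g₁ t * g₂ (st t)) * g₂ (st z)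
                - z * (g₁ t * g₂ (st t)) - (g₁ t * g₂ (st t)) * st z)
            = g₁ z * (t * st t) + (t * st t) * g₂ (st z)
              - z * (t * st t) - (t * st t) * st z from by noncomm_ring] at h2
        exact h2
      -- bilinear
      have hQ : ∀ t u : R, g₁ z * (t * st u + u * st t) + (t * st u + u * st t) * g₂ (st z)
          - z * (t * st u + u * st t) - (t * st u + u * st t) * st z ∈ Set.center R := by
        intro t u
        have h1 := hY1' (t + u)
        rw [hadd] at h1
        have h2 := hZsub (hZsub h1 (hY1' t)) (hY1' u)
        rw [show g₁ z * ((t + u) * (st t + st u)) + ((t + u) * (st t + st u)) * g₂ (st z)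
              - z * ((t + u) * (st t + st u)) - ((t + u) * (st t + st u)) * st z
              - (g₁ z * (t * st t) + (t * st t) * g₂ (st z)
                - z * (t * st t) - (t * st t) * st z)
              - (g₁ z * (u * st u) + (u * st u) * g₂ (st z)
                - z * (u * st u) - (u * st u) * st z)
            = g₁ z * (t * st u + u * st t) + (t * st u + u * st t) * g₂ (st z)
              - z * (t * st u + u * st t) - (t * st u + u * st t) * st z from by
          noncomm_ring] at h2
        exact h2
      -- u := 1
      have hQh : ∀ t : R, g₁ z * (t + st t) + (t + st t) * g₂ (st z)
          - z * (t + st t) - (t + st t) * st z ∈ Set.center R := by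
        intro t
        have h1 := hQ t 1
        rw [hst1, mul_one, one_mul] at h1
        exact h1
      -- u := s
      have hQk : ∀ t : R, g₁ z * (st t - t) + (st t - t) * g₂ (st z)
          - z * (st t - t) - (st t - t) * st z ∈ Set.center R := by
        intro t
        have h1 := hQ t s
        rw [hss] at h1
        rw [show t * -s + s * st t = s * (st t - t) from by
          rw [mul_neg, hc hsZ t]; noncomm_ring] at h1
        rw [show g₁ z * (s * (st t - t)) + s * (st t - t) * g₂ (st z)
              - z * (s * (st t - t)) - s * (st t - t) * st z
            = s * (g₁ z * (st t - t) + (st t - t) * g₂ (st z)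
              - z * (st t - t) - (st t - t) * st z) from by
          rw [hswap s (g₁ z) (st t - t) hsZ, hswap s z (st t - t) hsZ]
          noncomm_ring] at h1
        exact hcancel s _ hsZ hs0 h1
      -- W
      have hW : ∀ t : R, g₁ z * t + t * g₂ (st z) - z * t - t * st z ∈ Set.center R := by
        intro t
        apply htor2
        have h1 := hZsub (hQh t) (hQk t)
        rw [show g₁ z * (t + st t) + (t + st t) * g₂ (st z)
              - z * (t + st t) - (t + st t) * st z
              - (g₁ z * (st t - t) + (st t - t) * g₂ (st z)
                - z * (st t - t) - (st t - t) * st z)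
            = (g₁ z * t + t * g₂ (st z) - z * t - t * st z)
              + (g₁ z * t + t * g₂ (st z) - z * t - t * st z) from by
          noncomm_ring] at h1
        exact h1
      -- D
      have hmu : g₁ z + g₂ (st z) - z - st z ∈ Set.center R :=
        hZsub (hZsub hab hz) hz'
      have hD : ∀ t : R, g₁ z * t - t * g₁ z
          + (g₁ z + g₂ (st z) - z - st z) * t ∈ Set.center R := by
        intro t
        have h1 := hW t
        rw [show g₁ z * t + t * g₂ (st z) - z * t - t * st z
            = g₁ z * t - t * g₁ z + (g₁ z + g₂ (st z) - z - st z) * t from by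
          rw [sub_mul, sub_mul, ← hc hab t, ← hc hz' t]; noncomm_ring] at h1
        exact h1
      -- B9
      have hB9 : ∀ x y : R, (x * y - y * x) * (g₁ z * y - y * g₁ z) = 0 := by
        intro x y
        have hdx := hD x
        have hdy := hD y
        have hdxy := hD (x * y)
        have c1 : (g₁ z * (x * y) - (x * y) * g₁ z
            + (g₁ z + g₂ (st z) - z - st z) * (x * y)) * y
            - y * (g₁ z * (x * y) - (x * y) * g₁ z
            + (g₁ z + g₂ (st z) - z - st z) * (x * y)) = 0 :=
          sub_eq_zero.mpr (hc hdxy y).symm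
        have c2 : (g₁ z * x - x * g₁ z + (g₁ z + g₂ (st z) - z - st z) * x) * y
            - y * (g₁ z * x - x * g₁ z + (g₁ z + g₂ (st z) - z - st z) * x) = 0 :=
          sub_eq_zero.mpr (hc hdx y).symm
        have c3 : (g₁ z * y - y * g₁ z + (g₁ z + g₂ (st z) - z - st z) * y) * y
            - y * (g₁ z * y - y * g₁ z + (g₁ z + g₂ (st z) - z - st z) * y) = 0 :=
          sub_eq_zero.mpr (hc hdy y).symm
        have c4 : ∀ r : R, (g₁ z + g₂ (st z) - z - st z) * r
            - r * (g₁ z + g₂ (st z) - z - st z) = 0 :=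
          fun r => sub_eq_zero.mpr (hc hmu r).symm
        have master : (x * y - y * x) * (g₁ z * y - y * g₁ z)
            = ((g₁ z * (x * y) - (x * y) * g₁ z
                + (g₁ z + g₂ (st z) - z - st z) * (x * y)) * y
              - y * (g₁ z * (x * y) - (x * y) * g₁ z
                + (g₁ z + g₂ (st z) - z - st z) * (x * y)))
              - ((g₁ z * x - x * g₁ z + (g₁ z + g₂ (st z) - z - st z) * x) * y
                - y * (g₁ z * x - x * g₁ z + (g₁ z + g₂ (st z) - z - st z) * x)) * y
              - x * ((g₁ z * y - y * g₁ z + (g₁ z + g₂ (st z) - z - st z) * y) * y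
                - y * (g₁ z * y - y * g₁ z + (g₁ z + g₂ (st z) - z - st z) * y))
              + ((g₁ z + g₂ (st z) - z - st z) * (x * y - y * x)
                - (x * y - y * x) * (g₁ z + g₂ (st z) - z - st z)) * y
              + ((g₁ z + g₂ (st z) - z - st z) * y
                - y * (g₁ z + g₂ (st z) - z - st z)) * (x * y)
              - ((g₁ z + g₂ (st z) - z - st z) * x
                - x * (g₁ z + g₂ (st z) - z - st z)) * (y * y)
              + y * (((g₁ z + g₂ (st z) - z - st z) * x
                - x * (g₁ z + g₂ (st z) - z - st z)) * y) := by
          noncomm_ring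
        rw [master, c1, c2, c3, c4 (x * y - y * x), c4 y, c4 x]
        simp
      -- B10 : g₁ z ∈ Z
      have haZ : g₁ z ∈ Set.center R := by
        refine hcm fun y => ?_
        have hx : ∀ r : R, (g₁ z * y - y * g₁ z) * r * (g₁ z * y - y * g₁ z) = 0 := by
          intro r
          have h1 := hB9 (g₁ z * r) y
          have h2 : g₁ z * ((r * y - y * r) * (g₁ z * y - y * g₁ z)) = 0 := by
            rw [hB9 r y, mul_zero]
          have e : (g₁ z * y - y * g₁ z) * r * (g₁ z * y - y * g₁ z)
              = (g₁ z * r * y - y * (g₁ z * r)) * (g₁ z * y - y * g₁ z)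
                - g₁ z * ((r * y - y * r) * (g₁ z * y - y * g₁ z)) := by
            noncomm_ring
          rw [e, h1, h2, sub_zero]
        rcases hprime _ _ hx with h | h
        · exact (sub_eq_zero.mp h).symm
        · exact (sub_eq_zero.mp h).symm
      refine ⟨haZ, ?_⟩
      have h1 := hZsub hab haZ
      rw [add_sub_cancel_left] at h1
      exact h1
    refine ⟨fun w hw => (key w hw).1, fun w hw => ?_⟩
    have h1 := (key (st w) (hstZ hw)).2
    rw [hinv] at h1
    exact h1
  · -- Branch A : commutative
    left
    have hlamZ : g₁ s * g₂ s - s * s ∈ Set.center R := hZsub hEZ hs2Z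
    have key2 : ∀ x : R, (g₁ s * g₂ s - s * s) * (g₁ x * g₂ (st x)) ∈ Set.center R := by
      intro x
      have h2 := hyp (x * s)
      simp only [map_mul, hmul, hss, map_neg] at h2
      -- h2 : g₁ x * g₁ s * (-g₂ s * g₂ (st x)) + x * s * (-s * st x) ∈ Z
      have h3 := hZneg h2
      have e1 : g₁ x * g₁ s * (g₂ s * g₂ (st x))
          = g₁ s * g₂ s * (g₁ x * g₂ (st x)) := by
        rw [mul_assoc, ← mul_assoc (g₁ s), hswap (g₁ s * g₂ s) (g₁ x) (g₂ (st x)) hEZ]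
      have e2 : x * s * (s * st x) = s * s * (x * st x) := by
        rw [mul_assoc, ← mul_assoc s, hswap (s * s) x (st x) hs2Z]
      rw [show -(g₁ x * g₁ s * (-g₂ s * g₂ (st x)) + x * s * (-s * st x))
          = g₁ s * g₂ s * (g₁ x * g₂ (st x)) + s * s * (x * st x) from by
        rw [← e1, ← e2]; noncomm_ring] at h3
      have h4 := hZsub h3 (hZmul hs2Z (hyp x))
      rw [show g₁ s * g₂ s * (g₁ x * g₂ (st x)) + s * s * (x * st x)
            - s * s * (g₁ x * g₂ (st x) + x * st x)
          = (g₁ s * g₂ s - s * s) * (g₁ x * g₂ (st x)) from by noncomm_ring] at h4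
      exact h4
    have hM : ∀ x : R, g₁ x * g₂ (st x) ∈ Set.center R :=
      fun x => hcancel _ _ hlamZ hlam (key2 x)
    have hN : ∀ x : R, x * st x ∈ Set.center R := by
      intro x
      have h1 := hZsub (hyp x) (hM x)
      rw [add_sub_cancel_left] at h1
      exact h1
    have hlin : ∀ x y : R, x * st y + y * st x ∈ Set.center R := by
      intro x y
      have h1 := hN (x + y)
      rw [hadd] at h1
      have h2 := hZsub (hZsub h1 (hN x)) (hN y)
      rw [show (x + y) * (st x + st y) - x * st x - y * st y
          = x * st y + y * st x from by noncomm_ring] at h2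
      exact h2
    have h5 : ∀ x y : R, y * st x - x * st y ∈ Set.center R := by
      intro x y
      have h1 := hlin x (y * s)
      rw [hmul, hss] at h1
      rw [show x * (-s * st y) + y * s * st x = s * (y * st x - x * st y) from by
        rw [neg_mul, mul_neg, hswap s x (st y) hsZ, mul_assoc y,
          hswap s y (st x) hsZ]
        noncomm_ring] at h1
      exact hcancel s _ hsZ hs0 h1
    have h6 : ∀ x y : R, y * st x ∈ Set.center R := by
      intro x y
      apply htor2
      have h1 := hZadd (hlin x y) (h5 x y)
      rw [show x * st y + y * st x + (y * st x - x * st y)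
          = y * st x + y * st x from by noncomm_ring] at h1
      exact h1
    intro x y
    have hyZ : y ∈ Set.center R := by
      have h1 := h6 1 y
      rw [hst1, mul_one] at h1
      exact h1
    exact hc hyZ x
end

section
/- Let R be a 2-torsion free prime ring with involution * of the second kind, admitting nontrivial endomorphisms g₁, g₂ satisfying g₁(x)g₂(x*) - xx* ∈ Z(R) for all x ∈ R, and such that g₁(h) = h for all h ∈ H(R) ∩ Z(R). Then R is commutative. -/
section Helpers

variable {R : Type*} [Ring R]

/-- local notion: commutes with everything -/
abbrev IsCen (z : R) : Prop := ∀ r : R, r * z = z * r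

lemma cen_eq {u v : R} (h : u = v) (hu : IsCen u) : IsCen v := h ▸ hu

lemma cen_add {u v : R} (hu : IsCen u) (hv : IsCen v) : IsCen (u + v) := by
  intro r; rw [mul_add, add_mul, hu, hv]

lemma cen_sub {u v : R} (hu : IsCen u) (hv : IsCen v) : IsCen (u - v) := by
  intro r; rw [mul_sub, sub_mul, hu, hv]

lemma cen_neg {u : R} (hu : IsCen u) : IsCen (-u) := by
  intro r; rw [mul_neg, neg_mul, hu]

lemma cen_mul {u v : R} (hu : IsCen u) (hv : IsCen v) : IsCen (u * v) := by
  intro r; rw [← mul_assoc, hu, mul_assoc, hv, ← mul_assoc]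

lemma cen_half (htor : ∀ x : R, x + x = 0 → x = 0) {u : R}
    (h : IsCen (u + u)) : IsCen u := by
  intro r
  have h1 := h r
  have h2 : (r * u - u * r) + (r * u - u * r) = 0 := by
    have : (r * u - u * r) + (r * u - u * r) = r * (u + u) - (u + u) * r := by noncomm_ring
    rw [this, h1, sub_self]
  exact sub_eq_zero.mp (htor _ h2)

lemma cen_reg (hprime : ∀ a b : R, (∀ x : R, a * x * b = 0) → a = 0 ∨ b = 0)
    {z : R} (hz : IsCen z) (h0 : z ≠ 0) : ∀ t : R, z * t = 0 → t = 0 := by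
  intro t h
  rcases hprime z t (fun x => by
    calc z * x * t = x * z * t := by rw [← hz x]
    _ = x * (z * t) := by rw [mul_assoc]
    _ = 0 := by rw [h, mul_zero]) with h1 | h1
  · exact absurd h1 h0
  · exact h1

lemma cen_cancel (hprime : ∀ a b : R, (∀ x : R, a * x * b = 0) → a = 0 ∨ b = 0)
    {z u : R} (hz : IsCen z) (h0 : z ≠ 0) (h : IsCen (z * u)) : IsCen u := by
  intro r
  have h1 := h r
  have h2 : z * (r * u - u * r) = 0 := by
    calc z * (r * u - u * r) = (z * r) * u - z * (u * r) := by noncomm_ring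
    _ = (r * z) * u - z * (u * r) := by rw [hz r]
    _ = r * (z * u) - (z * u) * r := by noncomm_ring
    _ = 0 := by rw [h1, sub_self]
  exact sub_eq_zero.mp (cen_reg hprime hz h0 _ h2)

end Helpers

theorem stmt7 {R : Type*} [Ring R]
    (hprime : ∀ a b : R, (∀ x : R, a * x * b = 0) → a = 0 ∨ b = 0)
    (htor : ∀ x : R, x + x = 0 → x = 0)
    (st : R → R)
    (hadd : ∀ x y : R, st (x + y) = st x + st y)
    (hmul : ∀ x y : R, st (x * y) = st y * st x)
    (hinv : ∀ x : R, st (st x) = x)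
    (hsecond : ∃ s : R, s ≠ 0 ∧ st s = -s ∧ s ∈ Set.center R)
    (g₁ g₂ : R →+* R)
    (hg₁ : g₁ ≠ RingHom.id R)
    (hg₂ : g₂ ≠ RingHom.id R)
    (hfix : ∀ h : R, st h = h → h ∈ Set.center R → g₁ h = h)
    (hyp : ∀ x : R, g₁ x * g₂ (st x) - x * st x ∈ Set.center R) :
    ∀ x y : R, x * y = y * x := by
  obtain ⟨s, hs0, hss, hsc⟩ := hsecond
  have cs : IsCen s := fun r => Semigroup.mem_center_iff.mp hsc r
  have css : IsCen (s * s) := cen_mul cs cs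
  have chyp : ∀ x : R, IsCen (g₁ x * g₂ (st x) - x * st x) :=
    fun x r => Semigroup.mem_center_iff.mp (hyp x) r
  -- st 1 = 1
  have hstone : st (1 : R) = 1 := by
    have h := hmul (st (1 : R)) 1
    rw [mul_one, hinv] at h
    rw [mul_one] at h
    exact h.symm
  -- st (s*y) = -(s * st y)
  have est : ∀ y : R, st (s * y) = -(s * st y) := by
    intro y
    rw [hmul s y, hss, mul_neg, cs (st y)]
  -- st (x*s) = -(s * st x)
  have est' : ∀ x : R, st (x * s) = -(s * st x) := by
    intro x
    rw [hmul x s, hss, neg_mul]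
  -- g₁ (s*s) = s*s hence (g₁ s)^2 = s^2
  have haa : g₁ s * g₁ s = s * s := by
    have h1 : st (s * s) = s * s := by rw [hmul s s, hss, neg_mul_neg]
    have h2 : (s * s) ∈ Set.center R := Semigroup.mem_center_iff.mpr css
    have h3 := hfix (s * s) h1 h2
    rw [map_mul] at h3
    exact h3
  -- g₁ s commutes with the image of g₁
  have hg1c : ∀ y : R, g₁ y * g₁ s = g₁ s * g₁ y := by
    intro y
    have h := congrArg g₁ (cs y)
    rw [map_mul, map_mul] at h
    exact h
  -- the "15" relation : g₁ x + g₂ (st x) - (x + st x) is central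
  have h15 : ∀ x : R, IsCen (g₁ x + g₂ (st x) - (x + st x)) := by
    intro x
    have e : (g₁ (x + 1) * g₂ (st (x + 1)) - (x + 1) * st (x + 1))
        - (g₁ x * g₂ (st x) - x * st x)
        - (g₁ 1 * g₂ (st 1) - 1 * st 1)
        = g₁ x + g₂ (st x) - (x + st x) := by
      rw [hadd x 1, hstone, map_add g₁ x 1, map_add g₂ (st x) 1, map_one g₁, map_one g₂]
      noncomm_ring
    exact cen_eq e (cen_sub (cen_sub (chyp (x + 1)) (chyp x)) (chyp 1))
  -- central element s*s - g₁ s * g₂ s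
  have clam : IsCen (s * s - g₁ s * g₂ s) := by
    have e : g₁ s * g₂ (st s) - s * st s = s * s - g₁ s * g₂ s := by
      rw [hss, map_neg]; noncomm_ring
    exact cen_eq e (chyp s)
  by_cases hlam : s * s - g₁ s * g₂ s = 0
  · -- CASE λ = 0 : g₁ s * g₂ s = s * s
    have hab : g₁ s * g₂ s = s * s := (sub_eq_zero.mp hlam).symm
    -- g₁ s = g₂ s
    have cz0 : IsCen (g₁ s - g₂ s) := by
      have e : g₁ s + g₂ (st s) - (s + st s) = g₁ s - g₂ s := by
        rw [hss, map_neg]; noncomm_ring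
      exact cen_eq e (h15 s)
    have haz : g₁ s * (g₁ s - g₂ s) = 0 := by
      rw [mul_sub, haa, hab, sub_self]
    have hb : g₂ s = g₁ s := by
      rcases hprime (g₁ s) (g₁ s - g₂ s) (fun x => by
        calc g₁ s * x * (g₁ s - g₂ s) = g₁ s * (x * (g₁ s - g₂ s)) := by rw [mul_assoc]
        _ = g₁ s * ((g₁ s - g₂ s) * x) := by rw [cz0 x]
        _ = (g₁ s * (g₁ s - g₂ s)) * x := by rw [mul_assoc]
        _ = 0 := by rw [haz, zero_mul]) with h0 | h0
      · exfalso
        have hss0 : s * s = 0 := by rw [← haa, h0, zero_mul]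
        exact hs0 (cen_reg hprime cs hs0 s hss0)
      · exact (sub_eq_zero.mp h0).symm
    -- g₁ s commutes with image of g₂
    have hg2c : ∀ y : R, g₂ y * g₁ s = g₁ s * g₂ y := by
      intro y
      have h := congrArg g₂ (cs y)
      rw [map_mul, map_mul, hb] at h
      exact h
    -- relation 16
    have h16 : ∀ y : R, IsCen (g₁ s * g₁ y - g₁ s * g₂ (st y) - (s * y - s * st y)) := by
      intro y
      have e : g₁ (s * y) + g₂ (st (s * y)) - (s * y + st (s * y))
          = g₁ s * g₁ y - g₁ s * g₂ (st y) - (s * y - s * st y) := by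
        rw [est y, map_mul g₁ s y, map_neg g₂, map_mul g₂ s (st y), hb]
        noncomm_ring
      exact cen_eq e (h15 (s * y))
    -- relations E18 and E19
    have hE18 : ∀ y : R, IsCen ((g₁ s - s) * g₁ y - (g₁ s + s) * g₂ (st y)
        + (s * st y + s * st y)) := by
      intro y
      have e : (g₁ s * g₁ y - g₁ s * g₂ (st y) - (s * y - s * st y))
          - s * (g₁ y + g₂ (st y) - (y + st y))
          = (g₁ s - s) * g₁ y - (g₁ s + s) * g₂ (st y) + (s * st y + s * st y) := by
        noncomm_ring
      exact cen_eq e (cen_sub (h16 y) (cen_mul cs (h15 y)))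
    have hE19 : ∀ y : R, IsCen ((g₁ s + s) * g₁ y - (g₁ s - s) * g₂ (st y)
        - (s * y + s * y)) := by
      intro y
      have e : (g₁ s * g₁ y - g₁ s * g₂ (st y) - (s * y - s * st y))
          + s * (g₁ y + g₂ (st y) - (y + st y))
          = (g₁ s + s) * g₁ y - (g₁ s - s) * g₂ (st y) - (s * y + s * y) := by
        noncomm_ring
      exact cen_eq e (cen_add (h16 y) (cen_mul cs (h15 y)))
    have hdc : (g₁ s + s) * (g₁ s - s) = 0 := by
      have h2 := cs (g₁ s)
      calc (g₁ s + s) * (g₁ s - s)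
          = g₁ s * g₁ s - g₁ s * s + s * g₁ s - s * s := by noncomm_ring
      _ = 0 := by rw [haa, h2]; noncomm_ring
    have hcd : (g₁ s - s) * (g₁ s + s) = 0 := by
      have h2 := cs (g₁ s)
      calc (g₁ s - s) * (g₁ s + s)
          = g₁ s * g₁ s + g₁ s * s - s * g₁ s - s * s := by noncomm_ring
      _ = 0 := by rw [haa, h2]; noncomm_ring
    -- KEY : g₁ s is central
    have ca : IsCen (g₁ s) := by
      have key : ∀ y : R, g₁ s * st y = st y * g₁ s := by
        intro y
        have h := (hE18 y) (g₁ s + s)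
        have eL : (g₁ s + s) * ((g₁ s - s) * g₁ y - (g₁ s + s) * g₂ (st y)
            + (s * st y + s * st y))
            = -((g₁ s + s) * ((g₁ s + s) * g₂ (st y)))
              + ((s * (g₁ s * st y) + s * (s * st y)) + (s * (g₁ s * st y) + s * (s * st y))) := by
          calc (g₁ s + s) * ((g₁ s - s) * g₁ y - (g₁ s + s) * g₂ (st y) + (s * st y + s * st y))
              = ((g₁ s + s) * (g₁ s - s)) * g₁ y - (g₁ s + s) * ((g₁ s + s) * g₂ (st y))
                + ((g₁ s * (s * st y) + s * (s * st y)) + (g₁ s * (s * st y) + s * (s * st y))) := by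
                noncomm_ring
          _ = _ := by
                rw [hdc, ← mul_assoc (g₁ s) s (st y), cs (g₁ s), mul_assoc s (g₁ s) (st y)]
                noncomm_ring
        have eR : ((g₁ s - s) * g₁ y - (g₁ s + s) * g₂ (st y)
            + (s * st y + s * st y)) * (g₁ s + s)
            = -((g₁ s + s) * ((g₁ s + s) * g₂ (st y)))
              + ((s * (st y * g₁ s) + s * (s * st y)) + (s * (st y * g₁ s) + s * (s * st y))) := by
          calc ((g₁ s - s) * g₁ y - (g₁ s + s) * g₂ (st y) + (s * st y + s * st y)) * (g₁ s + s)
              = (g₁ s - s) * (g₁ y * g₁ s + g₁ y * s)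
                - (g₁ s + s) * (g₂ (st y) * g₁ s + g₂ (st y) * s)
                + ((s * (st y * g₁ s) + s * (st y * s)) + (s * (st y * g₁ s) + s * (st y * s))) := by
                noncomm_ring
          _ = ((g₁ s - s) * (g₁ s + s)) * g₁ y - (g₁ s + s) * ((g₁ s + s) * g₂ (st y))
                + ((s * (st y * g₁ s) + s * (s * st y)) + (s * (st y * g₁ s) + s * (s * st y))) := by
                rw [hg1c y, cs (g₁ y), hg2c (st y), cs (g₂ (st y)), cs (st y)]
                noncomm_ring
          _ = _ := by rw [hcd]; noncomm_ring
        rw [eL, eR] at h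
        have h2 := add_left_cancel h
        have h3 : s * ((g₁ s * st y - st y * g₁ s) + (g₁ s * st y - st y * g₁ s)) = 0 := by
          calc s * ((g₁ s * st y - st y * g₁ s) + (g₁ s * st y - st y * g₁ s))
              = ((s * (g₁ s * st y) + s * (s * st y)) + (s * (g₁ s * st y) + s * (s * st y)))
                - ((s * (st y * g₁ s) + s * (s * st y)) + (s * (st y * g₁ s) + s * (s * st y))) := by
                noncomm_ring
          _ = 0 := by rw [h2, sub_self]
        have h4 := cen_reg hprime cs hs0 _ h3
        exact sub_eq_zero.mp (htor _ h4)
      intro r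
      have h := key (st r)
      rw [hinv] at h
      exact h.symm
    have ccs : IsCen (g₁ s + s) := cen_add ca cs
    by_cases hd0 : g₁ s + s = 0
    · -- g₁ s = -s :  g₁ y - st y is always central
      have ha' : g₁ s = -s := eq_neg_of_add_eq_zero_left hd0
      have cE : ∀ y : R, IsCen (s * (st y - g₁ y) + s * (st y - g₁ y)) := by
        intro y
        have e : (g₁ s - s) * g₁ y - (g₁ s + s) * g₂ (st y) + (s * st y + s * st y)
            = s * (st y - g₁ y) + s * (st y - g₁ y) := by
          rw [ha']; noncomm_ring
        exact cen_eq e (hE18 y)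
      have cα' : ∀ y : R, IsCen (st y - g₁ y) :=
        fun y => cen_cancel hprime cs hs0 (cen_half htor (cE y))
      have cαn : ∀ y : R, IsCen (g₁ y - st y) :=
        fun y => cen_eq (neg_sub (st y) (g₁ y)) (cen_neg (cα' y))
      by_cases hall : ∀ y : R, g₁ y = st y
      · -- g₁ = * : anti-homomorphism which is a homomorphism ⇒ commutative
        intro X Y
        have key : ∀ u v : R, st u * st v = st v * st u := by
          intro u v
          have h2 : g₁ (u * v) = st u * st v := by rw [map_mul, hall u, hall v]
          exact (h2.symm).trans ((hall (u * v)).trans (hmul u v))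
        have h := key (st X) (st Y)
        rw [hinv, hinv] at h
        exact h
      · push_neg at hall
        obtain ⟨x₀, hx₀⟩ := hall
        have hα0 : g₁ x₀ - st x₀ ≠ 0 := sub_ne_zero.mpr hx₀
        have key : ∀ x y : R, IsCen ((g₁ y - st y) * st x + (g₁ x - st x) * st y) := by
          intro x y
          have hC : IsCen ((g₁ (x * y) - st (x * y)) + (g₁ (y * x) - st (y * x))
              - ((g₁ x - st x) * (g₁ y - st y) + (g₁ y - st y) * (g₁ x - st x))) :=
            cen_sub (cen_add (cαn (x * y)) (cαn (y * x)))
              (cen_add (cen_mul (cαn x) (cαn y)) (cen_mul (cαn y) (cαn x)))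
          have e : (g₁ (x * y) - st (x * y)) + (g₁ (y * x) - st (y * x))
              - ((g₁ x - st x) * (g₁ y - st y) + (g₁ y - st y) * (g₁ x - st x))
              = (st x * (g₁ y - st y) + (g₁ y - st y) * st x)
                + ((g₁ x - st x) * st y + st y * (g₁ x - st x)) := by
            rw [map_mul g₁ x y, map_mul g₁ y x, hmul x y, hmul y x]
            noncomm_ring
          have hC2 := cen_eq e hC
          have e2 : (st x * (g₁ y - st y) + (g₁ y - st y) * st x)
              + ((g₁ x - st x) * st y + st y * (g₁ x - st x))
              = ((g₁ y - st y) * st x + (g₁ x - st x) * st y)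
                + ((g₁ y - st y) * st x + (g₁ x - st x) * st y) := by
            rw [(cαn y) (st x), (cαn x) (st y)]
            noncomm_ring
          exact cen_half htor (cen_eq e2 hC2)
        have cx₀ : IsCen (st x₀) := by
          have h1 := key x₀ x₀
          exact cen_cancel hprime (cαn x₀) hα0 (cen_half htor h1)
        have csty : ∀ y : R, IsCen (st y) := by
          intro y
          have h1 := key x₀ y
          have h2 : IsCen ((g₁ y - st y) * st x₀) := cen_mul (cαn y) cx₀
          have e3 : ((g₁ y - st y) * st x₀ + (g₁ x₀ - st x₀) * st y)
              - (g₁ y - st y) * st x₀ = (g₁ x₀ - st x₀) * st y := by noncomm_ring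
          exact cen_cancel hprime (cαn x₀) hα0 (cen_eq e3 (cen_sub h1 h2))
        intro X Y
        have h := csty (st Y)
        rw [hinv] at h
        exact h X
    · -- g₁ s + s ≠ 0 : g₁ y - y is always central
      have cw : IsCen (s * (g₁ s + s)) := cen_mul cs ccs
      have hw0 : s * (g₁ s + s) ≠ 0 := fun h => hd0 (cen_reg hprime cs hs0 _ h)
      have cE : ∀ y : R, IsCen ((s * (g₁ s + s)) * (g₁ y - y) + (s * (g₁ s + s)) * (g₁ y - y)) := by
        intro y
        have e : (g₁ s + s) * ((g₁ s + s) * g₁ y - (g₁ s - s) * g₂ (st y) - (s * y + s * y))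
            = (s * (g₁ s + s)) * (g₁ y - y) + (s * (g₁ s + s)) * (g₁ y - y) := by
          calc (g₁ s + s) * ((g₁ s + s) * g₁ y - (g₁ s - s) * g₂ (st y) - (s * y + s * y))
              = ((g₁ s * g₁ s) * g₁ y + (g₁ s * s) * g₁ y + (s * g₁ s) * g₁ y + (s * s) * g₁ y)
                - ((g₁ s + s) * (g₁ s - s)) * g₂ (st y)
                - ((g₁ s * (s * y) + s * (s * y)) + (g₁ s * (s * y) + s * (s * y))) := by
                noncomm_ring
          _ = _ := by
                rw [haa, hdc, ← mul_assoc (g₁ s) s y, cs (g₁ s)]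
                noncomm_ring
        exact cen_eq e (cen_mul ccs (hE19 y))
      have cα : ∀ y : R, IsCen (g₁ y - y) :=
        fun y => cen_cancel hprime cw hw0 (cen_half htor (cE y))
      by_cases hall : ∀ y : R, g₁ y = y
      · exact absurd (RingHom.ext fun y => hall y) hg₁
      · push_neg at hall
        obtain ⟨x₀, hx₀⟩ := hall
        have hα0 : g₁ x₀ - x₀ ≠ 0 := sub_ne_zero.mpr hx₀
        have key : ∀ x y : R, IsCen (x * (g₁ y - y) + (g₁ x - x) * y) := by
          intro x y
          have e : (g₁ (x * y) - x * y) - (g₁ x - x) * (g₁ y - y)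
              = x * (g₁ y - y) + (g₁ x - x) * y := by
            rw [map_mul g₁ x y]; noncomm_ring
          exact cen_eq e (cen_sub (cα (x * y)) (cen_mul (cα x) (cα y)))
        have cx₀ : IsCen x₀ := by
          have e2 : x₀ * (g₁ x₀ - x₀) + (g₁ x₀ - x₀) * x₀
              = (g₁ x₀ - x₀) * x₀ + (g₁ x₀ - x₀) * x₀ := by
            rw [(cα x₀) x₀]
          exact cen_cancel hprime (cα x₀) hα0 (cen_half htor (cen_eq e2 (key x₀ x₀)))
        intro X Y
        have cy : IsCen Y := by
          have e3 : (x₀ * (g₁ Y - Y) + (g₁ x₀ - x₀) * Y) - x₀ * (g₁ Y - Y)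
              = (g₁ x₀ - x₀) * Y := by noncomm_ring
          exact cen_cancel hprime (cα x₀) hα0
            (cen_eq e3 (cen_sub (key x₀ Y) (cen_mul cx₀ (cα Y))))
        exact cy X
  · -- CASE λ ≠ 0 : x * st x is always central
    have cab : IsCen (g₁ s * g₂ s) :=
      cen_eq (show s * s - (s * s - g₁ s * g₂ s) = g₁ s * g₂ s by noncomm_ring)
        (cen_sub css clam)
    have hnorm : ∀ x : R, IsCen (x * st x) := by
      intro x
      have e1 : g₁ (x * s) * g₂ (st (x * s)) - (x * s) * st (x * s)
          = -((g₁ s * g₂ s) * (g₁ x * g₂ (st x))) + (s * s) * (x * st x) := by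
        rw [est' x, map_mul g₁ x s, map_neg g₂, map_mul g₂ s (st x)]
        calc g₁ x * g₁ s * -(g₂ s * g₂ (st x)) - x * s * -(s * st x)
            = -((g₁ x * (g₁ s * g₂ s)) * g₂ (st x)) + (x * (s * s)) * st x := by noncomm_ring
        _ = _ := by rw [cab (g₁ x), css x]; noncomm_ring
      have h2 : IsCen (-((g₁ s * g₂ s) * (g₁ x * g₂ (st x))) + (s * s) * (x * st x)) :=
        cen_eq e1 (chyp (x * s))
      have h3 : IsCen ((s * s) * (g₁ x * g₂ (st x) - x * st x)) := cen_mul css (chyp x)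
      have e4 : (-((g₁ s * g₂ s) * (g₁ x * g₂ (st x))) + (s * s) * (x * st x))
          + (s * s) * (g₁ x * g₂ (st x) - x * st x)
          = (s * s - g₁ s * g₂ s) * (g₁ x * g₂ (st x)) := by noncomm_ring
      have h4 : IsCen ((s * s - g₁ s * g₂ s) * (g₁ x * g₂ (st x))) :=
        cen_eq e4 (cen_add h2 h3)
      have e5 : (s * s - g₁ s * g₂ s) * (g₁ x * g₂ (st x))
          - (s * s - g₁ s * g₂ s) * (g₁ x * g₂ (st x) - x * st x)
          = (s * s - g₁ s * g₂ s) * (x * st x) := by noncomm_ring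
      have h5 : IsCen ((s * s - g₁ s * g₂ s) * (x * st x)) :=
        cen_eq e5 (cen_sub h4 (cen_mul clam (chyp x)))
      exact cen_cancel hprime clam hlam h5
    -- linearize
    have cln : ∀ x y : R, IsCen (x * st y + y * st x) := by
      intro x y
      have e : ((x + y) * st (x + y) - x * st x) - y * st y = x * st y + y * st x := by
        rw [hadd x y]; noncomm_ring
      exact cen_eq e (cen_sub (cen_sub (hnorm (x + y)) (hnorm x)) (hnorm y))
    have A8 : ∀ x y : R, IsCen (y * st x - x * st y) := by
      intro x y
      have e : x * st (s * y) + (s * y) * st x = s * (y * st x - x * st y) := by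
        rw [est y]
        calc x * -(s * st y) + s * y * st x
            = -((x * s) * st y) + s * (y * st x) := by noncomm_ring
        _ = -((s * x) * st y) + s * (y * st x) := by rw [cs x]
        _ = s * (y * st x - x * st y) := by noncomm_ring
      exact cen_cancel hprime cs hs0 (cen_eq e (cln x (s * y)))
    have cyx : ∀ x y : R, IsCen (y * st x) := by
      intro x y
      have e : (x * st y + y * st x) + (y * st x - x * st y) = y * st x + y * st x := by
        noncomm_ring
      exact cen_half htor (cen_eq e (cen_add (cln x y) (A8 x y)))
    intro X Y
    have h := cyx (st 1) Y
    have e : Y * st (st 1) = Y := by rw [hinv, mul_one]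
    exact (cen_eq e h) X
end

section
/- Let R be a 2-torsion free prime ring with involution * of the second kind, admitting nontrivial endomorphisms g₁, g₂ satisfying g₁(x)g₂(x*) - x*x ∈ Z(R) for all x ∈ R, and such that g₁(h) = h for all h ∈ H(R) ∩ Z(R). Then R is commutative. -/
namespace Stmt8Aux

variable {R : Type*} [Ring R]

/-- `C z` : `z` commutes with every element. -/
def C (z : R) : Prop := ∀ r : R, z * r = r * z

theorem C.sub {z w : R} (hz : C z) (hw : C w) : C (z - w) := fun r => by
  rw [sub_mul, mul_sub, hz r, hw r]

theorem C.add {z w : R} (hz : C z) (hw : C w) : C (z + w) := fun r => by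
  rw [add_mul, mul_add, hz r, hw r]

theorem C.mul {z w : R} (hz : C z) (hw : C w) : C (z * w) := fun r => by
  rw [mul_assoc, hw r, ← mul_assoc, hz r, mul_assoc]

theorem C.congr {z w : R} (h : C z) (e : z = w) : C w := e ▸ h

theorem comm_aux {A B v D : R} (hA : C A) (hB : C B) (hd : D = A - B * v) :
    D * v = v * D := by
  subst hd
  have e2' : B * v * v = v * (B * v) := by
    rw [hB v, mul_assoc, hB v]
  calc (A - B * v) * v = A * v - B * v * v := by noncomm_ring
    _ = v * A - v * (B * v) := by rw [hA v, e2']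
    _ = v * (A - B * v) := by noncomm_ring

end Stmt8Aux

theorem stmt8 {R : Type*} [Ring R]
    (hprime : ∀ a b : R, (∀ x : R, a * x * b = 0) → a = 0 ∨ b = 0)
    (htor : ∀ x : R, x + x = 0 → x = 0)
    (st : R → R)
    (hadd : ∀ x y : R, st (x + y) = st x + st y)
    (hmul : ∀ x y : R, st (x * y) = st y * st x)
    (hinv : ∀ x : R, st (st x) = x)
    (hsecond : ∃ s : R, s ≠ 0 ∧ st s = -s ∧ s ∈ Set.center R)
    (g₁ g₂ : R →+* R)
    (hg₁ : g₁ ≠ RingHom.id R)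
    (hg₂ : g₂ ≠ RingHom.id R)
    (hfix : ∀ h : R, st h = h → h ∈ Set.center R → g₁ h = h)
    (hyp : ∀ x : R, g₁ x * g₂ (st x) - st x * x ∈ Set.center R) :
    ∀ x y : R, x * y = y * x := by
  obtain ⟨s, hs0, hss, hsZ⟩ := hsecond
  have hsc : ∀ r : R, s * r = r * s := fun r => ((Semigroup.mem_center_iff.mp hsZ) r).symm
  have hend : ∀ a : R, a * s = s * a := fun a => (hsc a).symm
  have hleft : ∀ a b : R, a * (s * b) = s * (a * b) := fun a b => by
    rw [← mul_assoc, hend a, mul_assoc]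
  have hcF : ∀ x : R, Stmt8Aux.C (g₁ x * g₂ (st x) - st x * x) := fun x r =>
    ((Semigroup.mem_center_iff.mp (hyp x)) r).symm
  have hst0 : st 0 = 0 := by
    have h := hadd 0 0
    rw [add_zero] at h
    exact left_eq_add.mp h
  have hstneg : ∀ x : R, st (-x) = -st x := by
    intro x
    have h := hadd x (-x)
    rw [add_neg_cancel, hst0] at h
    exact (neg_eq_of_add_eq_zero_right h.symm).symm
  have hstsub : ∀ x y : R, st (x - y) = st x - st y := by
    intro x y
    rw [sub_eq_add_neg, hadd, hstneg, sub_eq_add_neg]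
  have hscancel : ∀ w : R, s * w = 0 → w = 0 := by
    intro w hw
    rcases hprime s w (fun x => by rw [hsc x, mul_assoc, hw, mul_zero]) with h | h
    · exact absurd h hs0
    · exact h
  have hCcs : ∀ E : R, Stmt8Aux.C (s * E) → Stmt8Aux.C E := by
    intro E h r
    have h1 : s * (E * r) = s * (r * E) := by
      rw [← mul_assoc, h r, ← mul_assoc, hend r, mul_assoc]
    exact sub_eq_zero.mp (hscancel _ (by rw [mul_sub, h1, sub_self]))
  have hChalf : ∀ E : R, Stmt8Aux.C (E + E) → Stmt8Aux.C E := by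
    intro E h r
    have h2 : E * r + E * r = r * E + r * E := by
      rw [← add_mul, h r, mul_add]
    refine sub_eq_zero.mp (htor _ ?_)
    calc E * r - r * E + (E * r - r * E) = E * r + E * r - (r * E + r * E) := by abel
      _ = 0 := by rw [h2, sub_self]
  -- Key identity (P): from F(x*y) and centrality of F(y), F(x).
  have hP : ∀ x y : R, Stmt8Aux.C (g₁ x * (st y * y) * g₂ (st x) +
      (g₁ y * g₂ (st y) - st y * y) * (st x * x) - st y * (st x * x) * y) := by
    intro x y
    refine ((hcF (x * y)).sub ((hcF y).mul (hcF x))).congr ?_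
    rw [← sub_eq_zero]
    have hk := hcF y (g₁ x)
    have e0 : g₁ (x * y) * g₂ (st (x * y)) - st (x * y) * (x * y) -
        (g₁ y * g₂ (st y) - st y * y) * (g₁ x * g₂ (st x) - st x * x) -
        (g₁ x * (st y * y) * g₂ (st x) +
          (g₁ y * g₂ (st y) - st y * y) * (st x * x) - st y * (st x * x) * y) =
        (g₁ x * (g₁ y * g₂ (st y) - st y * y) -
          (g₁ y * g₂ (st y) - st y * y) * g₁ x) * g₂ (st x) := by
      simp only [map_mul, hmul] <;> noncomm_ring
    rw [e0, ← hk, sub_self, zero_mul]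
  -- (P2): linearization of (P) in y.
  have hP2 : ∀ x y z : R, Stmt8Aux.C (g₁ x * (st y * z + st z * y) * g₂ (st x) +
      (g₁ y * g₂ (st z) + g₁ z * g₂ (st y) - st y * z - st z * y) * (st x * x) -
      st y * (st x * x) * z - st z * (st x * x) * y) := by
    intro x y z
    refine (((hP x (y + z)).sub (hP x y)).sub (hP x z)).congr ?_
    simp only [hadd, map_add] <;> noncomm_ring
  -- main engine: every symmetric element is central-ish (commutes with all).
  have hmain : ∀ y : R, st y = y → ∀ v : R, v * y = y * v := by
    intro y hy
    obtain ⟨Zc, hP3⟩ : ∃ z : R, ∀ x : R,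
        Stmt8Aux.C (z * (st x * x) + s * ((st x * x) * y - y * (st x * x))) := by
      refine ⟨g₁ y * g₂ (st s) + g₁ s * g₂ (st y) - st y * s - st s * y, fun x => ?_⟩
      refine (hP2 x y s).congr ?_
      simp only [hy, hss]
      simp only [mul_add, add_mul, mul_sub, sub_mul, neg_mul, mul_neg, mul_assoc,
        hend, hleft] <;> noncomm_ring
    have hP4 : ∀ x w : R, Stmt8Aux.C (Zc * (st x * w + st w * x) +
        s * ((st x * w + st w * x) * y - y * (st x * w + st w * x))) := by
      intro x w
      refine (((hP3 (x + w)).sub (hP3 x)).sub (hP3 w)).congr ?_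
      simp only [hadd] <;> noncomm_ring
    have hP5 : ∀ x w : R, Stmt8Aux.C (Zc * (st x * w - st w * x) +
        s * ((st x * w - st w * x) * y - y * (st x * w - st w * x))) := by
      intro x w
      refine hCcs _ ((hP4 x (w * s)).congr ?_)
      simp only [hmul, hss]
      simp only [mul_add, add_mul, mul_sub, sub_mul, neg_mul, mul_neg, mul_assoc,
        hend, hleft] <;> noncomm_ring
    have hP6 : ∀ u w : R, Stmt8Aux.C (Zc * (u * w) +
        s * ((u * w) * y - y * (u * w))) := by
      intro u w
      refine hChalf _ (((hP4 (st u) w).add (hP5 (st u) w)).congr ?_)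
      simp only [hinv] <;> noncomm_ring
    have hPhi : ∀ u : R, Stmt8Aux.C (Zc * u + s * (u * y - y * u)) := by
      intro u
      refine hCcs _ ((hP6 u s).congr ?_)
      simp only [mul_add, add_mul, mul_sub, sub_mul, neg_mul, mul_neg, mul_assoc,
        hend, hleft] <;> noncomm_ring
    have hKey : ∀ u v : R, s * (u * (v * y - y * v)) * v = v * (s * (u * (v * y - y * v))) := by
      intro u v
      exact Stmt8Aux.comm_aux (hPhi (u * v)) (hPhi u) (by noncomm_ring)
    have hcomm0 : ∀ v r u : R, (r * v - v * r) * (u * (v * y - y * v)) = 0 := by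
      intro v r u
      have k1 := hKey u v
      have k2 := hKey (r * u) v
      have c1 : s * (r * (v * (u * (v * y - y * v)))) =
          s * (v * (r * (u * (v * y - y * v)))) := by
        calc s * (r * (v * (u * (v * y - y * v))))
            = r * (v * (s * (u * (v * y - y * v)))) := by
              simp only [mul_add, add_mul, mul_sub, sub_mul, neg_mul, mul_neg, mul_assoc,
                hend, hleft] <;> noncomm_ring
          _ = r * (s * (u * (v * y - y * v)) * v) := by rw [k1]
          _ = s * (r * u * (v * y - y * v)) * v := by
              simp only [mul_add, add_mul, mul_sub, sub_mul, neg_mul, mul_neg, mul_assoc,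
                hend, hleft] <;> noncomm_ring
          _ = v * (s * (r * u * (v * y - y * v))) := k2
          _ = s * (v * (r * (u * (v * y - y * v)))) := by
              simp only [mul_add, add_mul, mul_sub, sub_mul, neg_mul, mul_neg, mul_assoc,
                hend, hleft] <;> noncomm_ring
      have c2 : r * (v * (u * (v * y - y * v))) - v * (r * (u * (v * y - y * v))) = 0 :=
        hscancel _ (by rw [mul_sub, c1, sub_self])
      have e : (r * v - v * r) * (u * (v * y - y * v)) =
          r * (v * (u * (v * y - y * v))) - v * (r * (u * (v * y - y * v))) := by
        noncomm_ring
      rw [e]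
      exact c2
    intro v
    by_cases hD : v * y - y * v = 0
    · exact sub_eq_zero.mp hD
    · exfalso
      have hall : ∀ r : R, r * v - v * r = 0 := by
        intro r
        rcases hprime (r * v - v * r) (v * y - y * v)
            (fun u => by rw [mul_assoc]; exact hcomm0 v r u) with h | h
        · exact h
        · exact absurd h hD
      apply hD
      have hyv : y * v = v * y := sub_eq_zero.mp (hall y)
      rw [← hyv, sub_self]
  -- conclusion
  intro x y
  have h1 := hmain (y + st y) (by rw [hadd, hinv]; exact add_comm _ _) x
  have h2pre := hmain (s * (y - st y)) (by
    rw [hmul, hstsub, hinv, hss, hsc (y - st y)]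
    noncomm_ring) x
  have h2 : x * (y - st y) = (y - st y) * x := by
    have e : s * (x * (y - st y) - (y - st y) * x) =
        x * (s * (y - st y)) - s * (y - st y) * x := by
      simp only [mul_add, add_mul, mul_sub, sub_mul, neg_mul, mul_neg, mul_assoc,
        hend, hleft] <;> noncomm_ring
    exact sub_eq_zero.mp (hscancel _ (by rw [e, h2pre, sub_self]))
  have l1 : x * y + x * st y = y * x + st y * x := by
    have h := h1; rw [mul_add, add_mul] at h; exact h
  have l2 : x * y - x * st y = y * x - st y * x := by
    have h := h2; rw [mul_sub, sub_mul] at h; exact h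
  have hsum : x * y - y * x + (x * y - y * x) = 0 := by
    have e : x * y - y * x + (x * y - y * x) =
        x * y + x * st y - (y * x + st y * x) + (x * y - x * st y - (y * x - st y * x)) := by
      abel
    rw [e, l1, l2, sub_self, sub_self, add_zero]
  exact sub_eq_zero.mp (htor _ hsum)
end

section
/- Let R be a 2-torsion free prime ring with involution * of the second kind. If R admits nontrivial endomorphisms g₁, g₂ satisfying g₁(x)g₂(x*) - xx* ∈ Z(R) for all x ∈ R, then R is commutative. -/
section
variable {R : Type*} [Ring R]

def Cen (a : R) : Prop := ∀ r : R, a * r = r * a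

lemma cen_add_s9 {a b : R} (ha : Cen a) (hb : Cen b) : Cen (a + b) := fun r => by
  rw [add_mul, mul_add, ha r, hb r]

lemma cen_neg_s9 {a : R} (ha : Cen a) : Cen (-a) := fun r => by
  rw [neg_mul, mul_neg, ha r]

lemma cen_sub_s9 {a b : R} (ha : Cen a) (hb : Cen b) : Cen (a - b) := fun r => by
  rw [sub_mul, mul_sub, ha r, hb r]

lemma cen_mul_s9 {a b : R} (ha : Cen a) (hb : Cen b) : Cen (a * b) := fun r => by
  rw [mul_assoc, hb r, ← mul_assoc, ha r, mul_assoc]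

lemma cen_of_eq {a b : R} (h : a = b) (ha : Cen a) : Cen b := h ▸ ha

lemma cen_left {c : R} (hc : Cen c) (a b : R) : a * (c * b) = c * (a * b) := by
  rw [← mul_assoc, ← hc a, mul_assoc]

lemma cen_right {c : R} (hc : Cen c) (a : R) : a * c = c * a := (hc a).symm

lemma cen_comm_mul {c : R} (hc : Cen c) (u v : R) :
    (c * u) * v - v * (c * u) = c * (u * v - v * u) := by
  rw [mul_sub, mul_assoc]
  congr 1
  rw [← mul_assoc, ← hc v, mul_assoc]

end

theorem stmt9 {R : Type*} [Ring R]
    (hprime : ∀ a b : R, (∀ x : R, a * x * b = 0) → a = 0 ∨ b = 0)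
    (htor : ∀ x : R, x + x = 0 → x = 0)
    (st : R → R)
    (hadd : ∀ x y : R, st (x + y) = st x + st y)
    (hmul : ∀ x y : R, st (x * y) = st y * st x)
    (hinv : ∀ x : R, st (st x) = x)
    (hsecond : ∃ s : R, s ≠ 0 ∧ st s = -s ∧ s ∈ Set.center R)
    (g₁ g₂ : R →+* R)
    (hg₁ : g₁ ≠ RingHom.id R)
    (hg₂ : g₂ ≠ RingHom.id R)
    (hyp : ∀ x : R, g₁ x * g₂ (st x) - x * st x ∈ Set.center R) :
    ∀ x y : R, x * y = y * x := by
  obtain ⟨s, hs0, hss, hsc⟩ := hsecond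
  have sC : Cen s := fun r => (Semigroup.mem_center_iff.mp hsc r).symm
  have hCF : ∀ x : R, Cen (g₁ x * g₂ (st x) - x * st x) :=
    fun x r => (Semigroup.mem_center_iff.mp (hyp x) r).symm
  have st0 : st 0 = 0 := by
    have h := hadd 0 0
    rw [add_zero] at h
    exact (left_eq_add.mp h)
  have stneg : ∀ x : R, st (-x) = - st x := by
    intro x
    have h := hadd x (-x)
    rw [add_neg_cancel, st0] at h
    exact (eq_neg_of_add_eq_zero_right h.symm)
  have stsub : ∀ x y : R, st (x - y) = st x - st y := by
    intro x y
    rw [sub_eq_add_neg, hadd, stneg, sub_eq_add_neg]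
  have czero : ∀ c : R, Cen c → c ≠ 0 → ∀ a : R, c * a = 0 → a = 0 := by
    intro c hc hcne a hca
    rcases hprime c a (fun u => by rw [hc u, mul_assoc, hca, mul_zero]) with h | h
    · exact absurd h hcne
    · exact h
  have szero : ∀ a : R, s * a = 0 → a = 0 := czero s sC hs0
  have cen_of_two : ∀ a : R, Cen (a + a) → Cen a := by
    intro a h r
    have h2 := h r
    have h3 : (a * r - r * a) + (a * r - r * a) = (a + a) * r - r * (a + a) := by
      noncomm_ring
    rw [h2, sub_self] at h3
    exact sub_eq_zero.mp (htor _ h3)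
  have cen_cancel : ∀ c : R, Cen c → c ≠ 0 → ∀ a : R, Cen (c * a) → Cen a := by
    intro c hc hcne a h r
    have h2 := h r
    have h3 : c * (a * r - r * a) = (c * a) * r - r * (c * a) := by
      rw [mul_sub, mul_assoc]
      congr 1
      rw [← mul_assoc, hc r, mul_assoc]
    rw [h2, sub_self] at h3
    exact sub_eq_zero.mp (czero c hc hcne _ h3)
  have scancel : ∀ a : R, Cen (s * a) → Cen a := cen_cancel s sC hs0
  have ssC : Cen (s * s) := cen_mul_s9 sC sC
  have ssne : s * s ≠ 0 := fun h => hs0 (szero s h)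
  have hW : ∀ a b : R,
      Cen (g₁ a * g₂ (st b) + g₁ b * g₂ (st a) - a * st b - b * st a) := by
    intro a b
    have h := cen_sub_s9 (cen_sub_s9 (hCF (a + b)) (hCF a)) (hCF b)
    refine cen_of_eq ?_ h
    rw [hadd, map_add, map_add]
    noncomm_ring
  have hc1 : Cen (s * s - g₁ s * g₂ s) := by
    have h := hCF s
    refine cen_of_eq ?_ h
    rw [hss, map_neg]
    noncomm_ring
  have hCt : Cen (g₁ s * g₂ s) :=
    cen_of_eq (show s * s - (s * s - g₁ s * g₂ s) = g₁ s * g₂ s by noncomm_ring)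
      (cen_sub_s9 ssC hc1)
  have hwim : ∀ y : R, g₁ s * g₁ y = g₁ y * g₁ s := by
    intro y
    rw [← map_mul, ← map_mul, sC y]
  have hvim : ∀ y : R, g₂ s * g₂ y = g₂ y * g₂ s := by
    intro y
    rw [← map_mul, ← map_mul, sC y]
  by_cases hcase : s * s - g₁ s * g₂ s = 0
  · -- CASE 2
    have hst : s * s = g₁ s * g₂ s := sub_eq_zero.mp hcase
    have E : ∀ x : R, Cen (x + st x - g₁ x - g₂ (st x)) := by
      intro x
      have h := hW (x * s) s
      refine cen_cancel _ ssC ssne _ (cen_of_eq ?_ h)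
      rw [map_mul, hmul, hss, map_mul, map_neg]
      calc (g₁ x * g₁ s) * -g₂ s + g₁ s * (-g₂ s * g₂ (st x)) - x * s * -s - s * (-s * st x)
          = x * (s * s) + s * (s * st x) - g₁ x * (g₁ s * g₂ s) - g₁ s * g₂ s * g₂ (st x) := by
            noncomm_ring
        _ = (s * s) * (x + st x - g₁ x - g₂ (st x)) := by
            rw [cen_right ssC x, ← mul_assoc s s, cen_right hCt (g₁ x), ← hst]
            noncomm_ring
    have hd' : Cen (g₂ s - g₁ s) := by
      refine cen_of_eq ?_ (E s)
      rw [hss, map_neg]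
      noncomm_ring
    have hdC : Cen (g₁ s - g₂ s) := cen_of_eq (neg_sub _ _) (cen_neg_s9 hd')
    have hvg1 : ∀ y : R, g₂ s * g₁ y = g₁ y * g₂ s := by
      intro y
      have h := hdC (g₁ y)
      rw [sub_mul, mul_sub, hwim y] at h
      exact sub_right_injective h
    by_cases hd : g₁ s - g₂ s = 0
    · -- subcase d = 0
      have hg2s : g₂ s = g₁ s := (sub_eq_zero.mp hd).symm
      have hww : g₁ s * g₁ s = s * s := by rw [hst, hg2s]
      have hwg2 : ∀ y : R, g₁ s * g₂ y = g₂ y * g₁ s := by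
        intro y
        rw [← hg2s]
        exact hvim y
      have skw : ∀ x : R, st x = -x → g₁ s * x = x * g₁ s := by
        intro x hx
        have h := E (s * x)
        have e : s * x + st (s * x) - g₁ (s * x) - g₂ (st (s * x))
            = s * x + x * s - g₁ s * g₁ x - g₂ x * g₁ s := by
          rw [hmul, hss, hx, map_mul g₁ s x, neg_mul_neg, map_mul g₂ x s, hg2s]
        have hm := cen_of_eq e h
        have hbw : (g₁ s * g₁ x + g₂ x * g₁ s) * g₁ s = g₁ s * (g₁ s * g₁ x + g₂ x * g₁ s) := by
          have hb1 : (g₁ s * g₁ x) * g₁ s = g₁ s * (g₁ s * g₁ x) := by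
            rw [mul_assoc, ← hwim x]
          have hb2 : (g₂ x * g₁ s) * g₁ s = g₁ s * (g₂ x * g₁ s) := by
            conv_lhs => rw [← hwg2 x]
            rw [mul_assoc]
          rw [add_mul, mul_add, hb1, hb2]
        have hm' : Cen (s * x + x * s - (g₁ s * g₁ x + g₂ x * g₁ s)) :=
          cen_of_eq (by noncomm_ring) hm
        have hcomb : (s * x + x * s) * g₁ s = g₁ s * (s * x + x * s) := by
          calc (s * x + x * s) * g₁ s
              = (s * x + x * s - (g₁ s * g₁ x + g₂ x * g₁ s)) * g₁ s
                + (g₁ s * g₁ x + g₂ x * g₁ s) * g₁ s := by noncomm_ring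
            _ = g₁ s * (s * x + x * s - (g₁ s * g₁ x + g₂ x * g₁ s))
                + g₁ s * (g₁ s * g₁ x + g₂ x * g₁ s) := by rw [hbw, hm' (g₁ s)]
            _ = g₁ s * (s * x + x * s) := by noncomm_ring
        rw [cen_right sC x] at hcomb
        have e3 : s * ((x * g₁ s - g₁ s * x) + (x * g₁ s - g₁ s * x))
            = (s * x + s * x) * g₁ s - g₁ s * (s * x + s * x) := by
          rw [mul_add (g₁ s) (s * x) (s * x), cen_left sC (g₁ s) x]
          noncomm_ring
        rw [hcomb, sub_self] at e3
        have e4 := htor _ (szero _ e3)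
        exact (sub_eq_zero.mp e4).symm
      have wC : Cen (g₁ s) := by
        intro r
        have k1 := skw (r - st r) (by rw [stsub, hinv]; noncomm_ring)
        have k2 := skw (s * (r + st r)) (by
          rw [hmul, hadd, hinv, hss, mul_neg, cen_right sC (st r + r), add_comm (st r) r])
        have k2' : g₁ s * (r + st r) = (r + st r) * g₁ s := by
          apply sub_eq_zero.mp
          apply szero
          have e5 : s * (g₁ s * (r + st r) - (r + st r) * g₁ s)
              = g₁ s * (s * (r + st r)) - (s * (r + st r)) * g₁ s := by
            rw [mul_sub, cen_left sC (g₁ s) (r + st r), mul_assoc]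
          rw [k2, sub_self] at e5
          exact e5
        have e6 : (g₁ s * r - r * g₁ s) + (g₁ s * r - r * g₁ s)
            = (g₁ s * (r - st r) - (r - st r) * g₁ s) + (g₁ s * (r + st r) - (r + st r) * g₁ s) := by
          noncomm_ring
        rw [k1, k2', sub_self, sub_self, add_zero] at e6
        exact sub_eq_zero.mp (htor _ e6)
      have p0 : ∀ x : R, Cen (g₁ s * x + g₁ s * st x + s * x - s * st x
          - (g₁ s * g₁ x + g₁ s * g₁ x)) := by
        intro x
        have h1 := hW x s
        have h2 := cen_mul_s9 wC (E x)
        refine cen_of_eq ?_ (cen_add_s9 h1 h2)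
        rw [hss, map_neg, hg2s, mul_neg (g₁ x) (g₁ s), ← hwim x, mul_neg x s, cen_right sC x]
        noncomm_ring
      have key : ∀ x : R, Cen ((s * g₁ s - s * s) * (g₁ x - st x)) := by
        intro x
        have hp1 := p0 (s * x)
        have hp3 := cen_mul_s9 sC (p0 x)
        have h := cen_sub_s9 hp1 hp3
        refine cen_of_two _ (cen_of_eq ?_ h)
        rw [hmul, hss, map_mul g₁ s x]
        rw [mul_neg (st x) s, cen_right sC (st x)]
        rw [cen_left sC (g₁ s) x]
        rw [mul_neg (g₁ s) (s * st x), cen_left sC (g₁ s) (st x)]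
        rw [← mul_assoc (g₁ s) (g₁ s) (g₁ x), hww]
        noncomm_ring
      have c2C : Cen (s * g₁ s - s * s) := cen_sub_s9 (cen_mul_s9 sC wC) ssC
      by_cases hc2 : s * g₁ s - s * s = 0
      · -- branch B : g₁ s = s, g₁ x - x central
        have hws : g₁ s = s := by
          have h : s * (g₁ s - s) = 0 := by rw [mul_sub]; exact hc2
          exact sub_eq_zero.mp (szero _ h)
        have ZC : ∀ x : R, Cen (x - g₁ x) := by
          intro x
          have h := p0 x
          rw [hws] at h
          exact scancel _ (cen_of_two _ (cen_of_eq (by noncomm_ring) h))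
        have Mz : ∀ x y : R, Cen ((x - g₁ x) * y + (y - g₁ y) * x) := by
          intro x y
          have h := cen_add_s9 (ZC (x * y)) (cen_mul_s9 (ZC x) (ZC y))
          have h2 : Cen ((x - g₁ x) * y + x * (y - g₁ y)) :=
            cen_of_eq (by rw [map_mul]; noncomm_ring) h
          exact cen_of_eq (by rw [← (ZC y) x]) h2
        have M1z : ∀ x : R, Cen ((x - g₁ x) * x) := fun x => cen_of_two _ (Mz x x)
        have M1z' : ∀ x r : R, (x - g₁ x) * (x * r - r * x) = 0 := by
          intro x r
          have h := (M1z x) r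
          have e := cen_comm_mul (ZC x) x r
          rw [h, sub_self] at e
          exact e.symm
        have M3z : ∀ x y r : R, (x - g₁ x) * (y * r - r * y) + (y - g₁ y) * (x * r - r * x) = 0 := by
          intro x y r
          have h := M1z' (x + y) r
          have e : (x + y - g₁ (x + y)) * ((x + y) * r - r * (x + y))
              = (x - g₁ x) * (x * r - r * x) + (y - g₁ y) * (y * r - r * y)
                + ((x - g₁ x) * (y * r - r * y) + (y - g₁ y) * (x * r - r * x)) := by
            rw [map_add]
            noncomm_ring
          rw [M1z' x r, M1z' y r, h] at e
          simpa using e.symm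
        by_cases hid : ∀ x : R, x - g₁ x = 0
        · exact absurd (RingHom.ext fun x => (sub_eq_zero.mp (hid x)).symm) hg₁
        · push_neg at hid
          obtain ⟨x₀, hx₀⟩ := hid
          have hx₀C : ∀ r : R, x₀ * r - r * x₀ = 0 :=
            fun r => czero _ (ZC x₀) hx₀ _ (M1z' x₀ r)
          intro x y
          have h := M3z x₀ y x
          rw [hx₀C x, mul_zero, add_zero] at h
          have h2 := czero _ (ZC x₀) hx₀ _ h
          exact (sub_eq_zero.mp h2).symm
      · -- branch A : g₁ x - st x central
        have DC : ∀ a : R, Cen (g₁ (st a) - a) := by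
          intro a
          have h := cen_cancel _ c2C hc2 _ (key (st a))
          exact cen_of_eq (by rw [hinv]) h
        have M : ∀ a b : R, Cen (b * a - a * b + b * (g₁ (st a) - a) + (g₁ (st b) - b) * a) := by
          intro a b
          have h := cen_sub_s9 (DC (a * b)) (cen_mul_s9 (DC b) (DC a))
          refine cen_of_eq ?_ h
          rw [hmul, map_mul]
          noncomm_ring
        have M1 : ∀ a : R, Cen ((g₁ (st a) - a) * a) := by
          intro a
          have h := M a a
          refine cen_of_two _ (cen_of_eq ?_ h)
          rw [show a * (g₁ (st a) - a) = (g₁ (st a) - a) * a from ((DC a) a).symm]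
          noncomm_ring
        have M1' : ∀ a r : R, (g₁ (st a) - a) * (a * r - r * a) = 0 := by
          intro a r
          have h := (M1 a) r
          have e := cen_comm_mul (DC a) a r
          rw [h, sub_self] at e
          exact e.symm
        have M3 : ∀ a b r : R, (g₁ (st a) - a) * (b * r - r * b)
            + (g₁ (st b) - b) * (a * r - r * a) = 0 := by
          intro a b r
          have h := M1' (a + b) r
          have e : (g₁ (st (a + b)) - (a + b)) * ((a + b) * r - r * (a + b))
              = (g₁ (st a) - a) * (a * r - r * a) + (g₁ (st b) - b) * (b * r - r * b)
                + ((g₁ (st a) - a) * (b * r - r * b) + (g₁ (st b) - b) * (a * r - r * a)) := by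
            rw [hadd, map_add]
            noncomm_ring
          rw [M1' a r, M1' b r, h] at e
          simpa using e.symm
        have Mc : ∀ a b : R, Cen (b * a - a * b) := by
          intro a b r
          have hY := (M a b) r
          have h3 := M3 a b r
          have e1 : (b * (g₁ (st a) - a)) * r - r * (b * (g₁ (st a) - a))
              = (g₁ (st a) - a) * (b * r - r * b) := by
            rw [show b * (g₁ (st a) - a) = (g₁ (st a) - a) * b from ((DC a) b).symm]
            exact cen_comm_mul (DC a) b r
          have e2 : ((g₁ (st b) - b) * a) * r - r * ((g₁ (st b) - b) * a)
              = (g₁ (st b) - b) * (a * r - r * a) := cen_comm_mul (DC b) a r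
          have epure : (b * a - a * b) * r - r * (b * a - a * b)
              = ((b * a - a * b + b * (g₁ (st a) - a) + (g₁ (st b) - b) * a) * r
                  - r * (b * a - a * b + b * (g₁ (st a) - a) + (g₁ (st b) - b) * a))
                - ((b * (g₁ (st a) - a)) * r - r * (b * (g₁ (st a) - a)))
                - (((g₁ (st b) - b) * a) * r - r * ((g₁ (st b) - b) * a)) := by noncomm_ring
          rw [hY, sub_self, e1, e2] at epure
          have efin : (b * a - a * b) * r - r * (b * a - a * b)
              = -((g₁ (st a) - a) * (b * r - r * b) + (g₁ (st b) - b) * (a * r - r * a)) := by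
            rw [epure]
            abel
          rw [h3, neg_zero] at efin
          exact sub_eq_zero.mp efin
        intro x y
        have hc : Cen (x * y - y * x) := Mc y x
        have hxc : Cen (x * (x * y - y * x)) := cen_of_eq (by noncomm_ring) (Mc (x * y) x)
        have h0 : (x * (x * y - y * x)) * y - y * (x * (x * y - y * x)) = 0 := by
          rw [hxc y, sub_self]
        have e : (x * (x * y - y * x)) * y - y * (x * (x * y - y * x))
            = x * ((x * y - y * x) * y - y * (x * y - y * x))
              + (x * y - y * x) * (x * y - y * x) := by noncomm_ring
        have hcy : (x * y - y * x) * y - y * (x * y - y * x) = 0 := by rw [hc y, sub_self]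
        rw [h0, hcy, mul_zero, zero_add] at e
        have hcc : (x * y - y * x) * (x * y - y * x) = 0 := e.symm
        have hker : ∀ u : R, (x * y - y * x) * u * (x * y - y * x) = 0 := by
          intro u
          rw [hc u, mul_assoc, hcc, mul_zero]
        rcases hprime _ _ hker with h | h
        · exact sub_eq_zero.mp h
        · exact sub_eq_zero.mp h
    · -- subcase d ≠ 0
      have key : ∀ y : R, Cen ((g₁ s - g₂ s) * (y + st y)) := by
        intro y
        have h1 := hW y s
        have h2 := E (s * y)
        have h3 := cen_sub_s9 h1 h2
        have h4 : Cen ((g₁ s - g₂ s) * g₁ y + (g₁ s - g₂ s) * g₂ (st y)) := by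
          refine cen_of_eq ?_ h3
          rw [hmul, hss, map_mul g₁ s y, map_mul g₂ (st y) (-s), map_neg g₂ s]
          rw [mul_neg y s, mul_neg (st y) s, mul_neg (g₁ y) (g₂ s),
            mul_neg (g₂ (st y)) (g₂ s)]
          rw [cen_right sC y, cen_right sC (st y),
            show g₁ y * g₂ s = g₂ s * g₁ y from (hvg1 y).symm,
            show g₂ (st y) * g₂ s = g₂ s * g₂ (st y) from (hvim (st y)).symm]
          noncomm_ring
        have h5 := cen_mul_s9 hdC (E y)
        refine cen_of_eq ?_ (cen_add_s9 h4 h5)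
        noncomm_ring
      have key2 : ∀ y : R, Cen ((g₁ s - g₂ s) * y) := by
        intro y
        have h1 := key (s * y)
        have h2 : Cen ((g₁ s - g₂ s) * (y - st y)) := by
          refine scancel _ (cen_of_eq ?_ h1)
          rw [hmul, hss, mul_neg, cen_right sC (st y), ← sub_eq_add_neg, ← mul_sub,
            cen_left sC]
        have h3 := cen_add_s9 (key y) h2
        exact cen_of_two _ (cen_of_eq (by noncomm_ring) h3)
      have allC : ∀ y : R, Cen y := fun y => cen_cancel _ hdC hd y (key2 y)
      intro x y
      exact (allC y x).symm
  · -- CASE 1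
    have key : ∀ x : R, Cen ((s * s - g₁ s * g₂ s) * (x * st x)) := by
      intro x
      have h1 := hCF (x * s)
      have e1 : g₁ (x * s) * g₂ (st (x * s)) - (x * s) * st (x * s)
          = (s * s) * (x * st x) - (g₁ s * g₂ s) * (g₁ x * g₂ (st x)) := by
        rw [map_mul, hmul, hss, map_mul, map_neg]
        calc (g₁ x * g₁ s) * (-g₂ s * g₂ (st x)) - x * s * (-s * st x)
            = x * (s * (s * st x)) - g₁ x * (g₁ s * g₂ s * g₂ (st x)) := by noncomm_ring
          _ = (s * s) * (x * st x) - (g₁ s * g₂ s) * (g₁ x * g₂ (st x)) := by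
              rw [cen_left sC x, cen_left sC x, ← mul_assoc s s,
                cen_left hCt (g₁ x)]
      have h2 := cen_of_eq e1 h1
      have h3 := cen_mul_s9 hCt (hCF x)
      refine cen_of_eq ?_ (cen_add_s9 h2 h3)
      noncomm_ring
    have xxC : ∀ x : R, Cen (x * st x) :=
      fun x => cen_cancel _ hc1 hcase _ (key x)
    have lin : ∀ x y : R, Cen (x * st y + y * st x) := by
      intro x y
      have h := cen_sub_s9 (cen_sub_s9 (xxC (x + y)) (xxC x)) (xxC y)
      refine cen_of_eq ?_ h
      rw [hadd]
      noncomm_ring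
    have swap : ∀ x y : R, Cen (y * st x - x * st y) := by
      intro x y
      have h := lin x (s * y)
      refine scancel _ (cen_of_eq ?_ h)
      rw [hmul, hss]
      calc x * (st y * -s) + s * y * st x
          = s * (y * st x) - x * (st y * s) := by noncomm_ring
        _ = s * (y * st x - x * st y) := by
            rw [cen_right sC (st y), cen_left sC x, ← mul_sub]
    have yxC : ∀ x y : R, Cen (y * st x) := by
      intro x y
      have h := cen_add_s9 (lin x y) (swap x y)
      exact cen_of_two _ (cen_of_eq (by noncomm_ring) h)
    have allC : ∀ y : R, Cen y := by
      intro y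
      have h := yxC s y
      have h2 : Cen (s * y) := by
        refine cen_of_eq ?_ (cen_neg_s9 h)
        rw [hss, mul_neg, neg_neg]
        exact cen_right sC y
      exact scancel y h2
    intro x y
    exact (allC y x).symm
end

section
/- Let R be a 2-torsion free prime ring with involution * of the second kind. If R admits nontrivial endomorphisms g₁, g₂ satisfying g₁(x)g₂(x*) - x*x ∈ Z(R) for all x ∈ R, then R is commutative. -/
namespace Stmt10Aux

variable {R : Type*} [Ring R]

/-- commuting with everything -/
def CC (u : R) : Prop := ∀ r : R, u * r = r * u

theorem CC.add {u v : R} (hu : CC u) (hv : CC v) : CC (u + v) := fun r => by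
  rw [add_mul, mul_add, hu r, hv r]

theorem CC.neg {u : R} (hu : CC u) : CC (-u) := fun r => by
  rw [neg_mul, mul_neg, hu r]

theorem CC.sub {u v : R} (hu : CC u) (hv : CC v) : CC (u - v) := fun r => by
  rw [sub_mul, mul_sub, hu r, hv r]

theorem CC.mul {u v : R} (hu : CC u) (hv : CC v) : CC (u * v) := fun r => by
  rw [mul_assoc, hv r, ← mul_assoc, hu r, mul_assoc]

theorem CC.of_eq {u v : R} (h : u = v) (hu : CC u) : CC v := h ▸ hu

theorem CC.pull {z : R} (hz : CC z) (u v : R) : u * (z * v) = z * (u * v) := by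
  rw [← mul_assoc, ← hz u, mul_assoc]

theorem CC.pull1 {z : R} (hz : CC z) (u : R) : u * z = z * u := (hz u).symm

theorem CC.half (htor : ∀ x : R, x + x = 0 → x = 0) {u : R} (h : CC (u + u)) : CC u := fun r => by
  have h1 : (u + u) * r - r * (u + u) = 0 := sub_eq_zero.mpr (h r)
  have h2 : (u * r - r * u) + (u * r - r * u) = 0 := by
    rw [show (u * r - r * u) + (u * r - r * u) = (u + u) * r - r * (u + u) by noncomm_ring, h1]
  exact sub_eq_zero.mp (htor _ h2)

theorem CC.split (hprime : ∀ a b : R, (∀ x : R, a * x * b = 0) → a = 0 ∨ b = 0)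
    {z r : R} (hz : CC z) (hzr : CC (z * r)) : z = 0 ∨ CC r := by
  by_cases h0 : z = 0
  · exact Or.inl h0
  right
  intro t
  have hzd : z * (r * t - t * r) = 0 := by
    have h1 : z * r * t = t * (z * r) := hzr t
    have h2 : z * (t * r) = t * (z * r) := by
      rw [← mul_assoc, hz t, mul_assoc]
    rw [mul_sub, ← mul_assoc, h1, h2, sub_self]
  have key : ∀ w : R, z * w * (r * t - t * r) = 0 := fun w => by
    rw [hz w, mul_assoc, hzd, mul_zero]
  rcases hprime z _ key with h | h
  · exact absurd h h0
  · exact sub_eq_zero.mp h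

theorem CC.reg (hprime : ∀ a b : R, (∀ x : R, a * x * b = 0) → a = 0 ∨ b = 0)
    {z : R} (hz : CC z) (h0 : z ≠ 0) {t : R} (h : z * t = 0) : t = 0 := by
  rcases hprime z t (fun w => by rw [hz w, mul_assoc, h, mul_zero]) with h' | h'
  · exact absurd h' h0
  · exact h'

end Stmt10Aux

open Stmt10Aux in
theorem stmt10 {R : Type*} [Ring R]
    (hprime : ∀ a b : R, (∀ x : R, a * x * b = 0) → a = 0 ∨ b = 0)
    (htor : ∀ x : R, x + x = 0 → x = 0)
    (st : R → R)
    (hadd : ∀ x y : R, st (x + y) = st x + st y)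
    (hmul : ∀ x y : R, st (x * y) = st y * st x)
    (hinv : ∀ x : R, st (st x) = x)
    (hsecond : ∃ s : R, s ≠ 0 ∧ st s = -s ∧ s ∈ Set.center R)
    (g₁ g₂ : R →+* R)
    (hg₁ : g₁ ≠ RingHom.id R)
    (hg₂ : g₂ ≠ RingHom.id R)
    (hyp : ∀ x : R, g₁ x * g₂ (st x) - st x * x ∈ Set.center R) :
    ∀ x y : R, x * y = y * x := by
  classical
  obtain ⟨s, hs0, hss, hscen⟩ := hsecond
  have Cs : CC s := fun r => (Set.mem_center_iff.mp hscen).comm r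
  have hpull : ∀ u v : R, u * (s * v) = s * (u * v) := CC.pull Cs
  have hpull1 : ∀ u : R, u * s = s * u := CC.pull1 Cs
  have Cc : CC (s * s) := Cs.mul Cs
  have hc0 : s * s ≠ 0 := fun h => hs0 (CC.reg hprime Cs hs0 h)
  have hF : ∀ x : R, CC (g₁ x * g₂ (st x) - st x * x) := fun x r =>
    (Set.mem_center_iff.mp (hyp x)).comm r
  have hFs : CC (s * s - g₁ s * g₂ s) := by
    have h := hF s
    rw [hss, map_neg] at h
    exact CC.of_eq (by noncomm_ring) h
  have Cab : CC (g₁ s * g₂ s) :=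
    CC.of_eq (show s * s - (s * s - g₁ s * g₂ s) = g₁ s * g₂ s by noncomm_ring) (Cc.sub hFs)
  have hKey : ∀ x : R, CC ((s * s - g₁ s * g₂ s) * (g₁ x * g₂ (st x))) := by
    intro x
    have h1 : CC ((s * s) * (g₁ x * g₂ (st x) - st x * x)) := Cc.mul (hF x)
    have h2 := hF (x * s)
    have e2 : g₁ (x * s) * g₂ (st (x * s)) - st (x * s) * (x * s)
        = -(g₁ x * (g₁ s * (g₂ s * g₂ (st x)))) + s * (s * (st x * x)) := by
      simp only [map_mul, map_add, map_neg, hmul, hadd, hss, neg_mul, mul_neg, neg_neg,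
          mul_add, add_mul, mul_sub, sub_mul, mul_assoc]
      try simp only [hpull, hpull1]
      try noncomm_ring
    rw [e2] at h2
    refine CC.of_eq ?_ (h1.add h2)
    have sl2 : g₁ x * (g₁ s * (g₂ s * g₂ (st x))) = g₁ s * g₂ s * (g₁ x * g₂ (st x)) := by
      rw [← mul_assoc (g₁ s) (g₂ s) (g₂ (st x)), ← mul_assoc, Cab.pull1 (g₁ x), mul_assoc]
    rw [sl2]
    noncomm_ring
  by_cases hlam : s * s - g₁ s * g₂ s = 0
  · -- degenerate case : g₁ s * g₂ s = s * s
    have hab : g₁ s * g₂ s = s * s := (sub_eq_zero.mp hlam).symm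
    have hab' : ∀ v : R, g₁ s * (g₂ s * v) = s * (s * v) := fun v => by
      rw [← mul_assoc, hab, mul_assoc]
    have hA1 : ∀ x : R, CC (-(g₁ x * g₂ s) + g₁ s * g₂ (st x) + s * x - st x * s) := by
      intro x
      have h := ((hF (x + s)).sub (hF x)).sub (hF s)
      refine CC.of_eq ?_ h
      simp only [map_mul, map_add, map_neg, hmul, hadd, hss, neg_mul, mul_neg, neg_neg,
          mul_add, add_mul, mul_sub, sub_mul, mul_assoc]
      try simp only [hpull, hpull1]
      try noncomm_ring
    have hQ : ∀ x : R, CC (g₁ x + g₂ (st x) - x - st x) := by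
      intro x
      have h := hA1 (x * s)
      have e : -(g₁ (x * s) * g₂ s) + g₁ s * g₂ (st (x * s)) + s * (x * s) - st (x * s) * s
          = -(s * (s * (g₁ x + g₂ (st x) - x - st x))) := by
        simp only [map_mul, map_add, map_neg, hmul, hadd, hss, neg_mul, mul_neg, neg_neg,
          mul_add, add_mul, mul_sub, sub_mul, mul_assoc, hab, hab']
        try simp only [hpull, hpull1]
        try noncomm_ring
      rw [e] at h
      have h' : CC (s * (s * (g₁ x + g₂ (st x) - x - st x))) := CC.of_eq (neg_neg _) h.neg
      have h1 := (CC.split hprime Cs h').resolve_left hs0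
      exact (CC.split hprime Cs h1).resolve_left hs0
    have hd : CC (g₁ s - g₂ s) := by
      have h := hQ s
      rw [hss, map_neg] at h
      exact CC.of_eq (by noncomm_ring) h
    by_cases hd0 : g₁ s - g₂ s = 0
    · -- g₂ s = g₁ s
      have hba : g₂ s = g₁ s := (sub_eq_zero.mp hd0).symm
      have haa := hab
      rw [hba] at haa
      have haa' : ∀ v : R, g₁ s * (g₁ s * v) = s * (s * v) := fun v => by
        rw [← mul_assoc, haa, mul_assoc]
      have hAQA : ∀ y : R, CC (g₁ s * ((g₁ y + g₂ (st y) - y - st y) * g₁ s)) := by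
        intro y
        refine CC.of_eq ?_ ((hQ y).mul Cc)
        rw [(hQ y).pull (g₁ s) (g₁ s), haa]
      have hG1' : ∀ y : R,
          CC (s * (s * y) + s * (s * st y) - g₁ s * (y * g₁ s) - g₁ s * (st y * g₁ s)) := by
        intro y
        have h := (hA1 (s * y)).add (hAQA y)
        refine CC.of_eq ?_ h
        simp only [map_mul, map_add, map_neg, hmul, hadd, hss, neg_mul, mul_neg, neg_neg,
          mul_add, add_mul, mul_sub, sub_mul, mul_assoc, hba,
          haa, haa']
        try simp only [hpull, hpull1]
        try noncomm_ring
      have hG1'' : ∀ y : R,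
          CC (s * (s * y) - s * (s * st y) - g₁ s * (y * g₁ s) + g₁ s * (st y * g₁ s)) := by
        intro y
        have h := hG1' (y * s)
        have e : s * (s * (y * s)) + s * (s * st (y * s)) - g₁ s * (y * s * g₁ s)
              - g₁ s * (st (y * s) * g₁ s)
            = s * (s * (s * y) - s * (s * st y) - g₁ s * (y * g₁ s) + g₁ s * (st y * g₁ s)) := by
          simp only [map_mul, map_add, map_neg, hmul, hadd, hss, neg_mul, mul_neg, neg_neg,
          mul_add, add_mul, mul_sub, sub_mul, mul_assoc]
          try simp only [hpull, hpull1]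
          try noncomm_ring
        rw [e] at h
        exact (CC.split hprime Cs h).resolve_left hs0
      have hG1 : ∀ y : R, CC (s * (s * y) - g₁ s * (y * g₁ s)) := by
        intro y
        refine CC.half htor (CC.of_eq ?_ ((hG1' y).add (hG1'' y)))
        noncomm_ring
      have hw : ∀ y : R, CC (y * g₁ s - g₁ s * y) := by
        intro y
        have h := hG1 (y * g₁ s)
        have e : s * (s * (y * g₁ s)) - g₁ s * (y * g₁ s * g₁ s)
            = s * (s * (y * g₁ s - g₁ s * y)) := by
          simp only [map_mul, map_add, map_neg, hmul, hadd, hss, neg_mul, mul_neg, neg_neg,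
          mul_add, add_mul, mul_sub, sub_mul, mul_assoc, haa, haa']
          try simp only [hpull, hpull1]
          try noncomm_ring
        rw [e] at h
        have h1 := (CC.split hprime Cs h).resolve_left hs0
        exact (CC.split hprime Cs h1).resolve_left hs0
      have hacen : CC (g₁ s) := by
        intro y
        have hWC := hw y
        have hkeyeq : g₁ s * (y * g₁ s - g₁ s * y) = -((y * g₁ s - g₁ s * y) * g₁ s) := by
          simp only [map_mul, map_add, map_neg, hmul, hadd, hss, neg_mul, mul_neg, neg_neg,
          mul_add, add_mul, mul_sub, sub_mul, mul_assoc, mul_sub, sub_mul, haa, haa']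
          try simp only [hpull, hpull1]
          try noncomm_ring
        have h4 : g₁ s * (y * g₁ s - g₁ s * y) + (y * g₁ s - g₁ s * y) * g₁ s = 0 := by
          rw [hkeyeq]
          noncomm_ring
        rw [hWC (g₁ s)] at h4
        have h5 := htor _ h4
        have h6 : (s * s) * (y * g₁ s - g₁ s * y) = 0 := by
          rw [← haa, mul_assoc, h5, mul_zero]
        have h7 := CC.reg hprime Cc hc0 h6
        exact (sub_eq_zero.mp h7).symm
      have hfact : (s - g₁ s) * (s + g₁ s) = 0 := by
        rw [sub_mul, mul_add, mul_add, haa, hpull1 (g₁ s)]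
        noncomm_ring
      have hcs : CC (s - g₁ s) := Cs.sub hacen
      rcases hprime (s - g₁ s) (s + g₁ s)
          (fun w => by rw [hcs w, mul_assoc, hfact, mul_zero]) with hps | hps
      · -- g₁ s = s
        have has : g₁ s = s := (sub_eq_zero.mp hps).symm
        have hGid : ∀ x : R, CC (g₁ x - x) := by
          intro x
          have h := hA1 x
          rw [hba, has] at h
          have e : -(g₁ x * s) + s * g₂ (st x) + s * x - st x * s
              = s * (-(g₁ x) + g₂ (st x) + x - st x) := by
            simp only [map_mul, map_add, map_neg, hmul, hadd, hss, neg_mul, mul_neg, neg_neg,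
          mul_add, add_mul, mul_sub, sub_mul, mul_assoc]
            try simp only [hpull, hpull1]
            try noncomm_ring
          rw [e] at h
          have h1 := (CC.split hprime Cs h).resolve_left hs0
          refine CC.half htor (CC.of_eq ?_ ((hQ x).sub h1))
          noncomm_ring
        by_contra hcon
        push_neg at hcon
        obtain ⟨x₀, y₀, hxy0⟩ := hcon
        have hnc : ¬ CC x₀ := fun h => hxy0 (h y₀)
        have hmux : ∀ x : R, CC ((g₁ x - x) * x) := by
          intro x
          have hsl : g₁ x * x = x * g₁ x := by
            have h := (hGid x) x
            rw [sub_mul, mul_sub] at h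
            exact sub_left_inj.mp h
          have e : g₁ (x * x) - x * x
              = ((g₁ x - x) * x + (g₁ x - x) * x) + (g₁ x - x) * (g₁ x - x) := by
            simp only [map_mul, sub_mul, mul_sub, hsl]
            noncomm_ring
          refine CC.half htor
            (CC.of_eq ?_ ((CC.of_eq e (hGid (x * x))).sub ((hGid x).mul (hGid x))))
          noncomm_ring
        have hdisj : ∀ x : R, g₁ x - x = 0 ∨ CC x := fun x =>
          CC.split hprime (hGid x) (hmux x)
        have h₀ : g₁ x₀ - x₀ = 0 := (hdisj x₀).resolve_right hnc
        rw [sub_eq_zero] at h₀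
        have hall : ∀ w : R, g₁ w = w := by
          intro w
          rcases hdisj w with h | hCw
          · exact sub_eq_zero.mp h
          · have hno : ¬ CC (w + x₀) := fun h =>
              hnc (CC.of_eq (add_sub_cancel_left w x₀) (h.sub hCw))
            have h1 : g₁ (w + x₀) - (w + x₀) = 0 := (hdisj (w + x₀)).resolve_right hno
            rw [map_add, sub_eq_zero, h₀] at h1
            exact add_right_cancel h1
        exact hg₁ (RingHom.ext fun w => by rw [hall w, RingHom.id_apply])
      · -- g₁ s = -s
        have has : g₁ s = -s := eq_neg_of_add_eq_zero_right hps
        have hH : ∀ x : R, CC (g₂ (st x) - x) := by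
          intro x
          have h := hA1 x
          rw [hba, has] at h
          have e : -(g₁ x * -s) + -s * g₂ (st x) + s * x - st x * s
              = s * (g₁ x - g₂ (st x) + x - st x) := by
            simp only [map_mul, map_add, map_neg, hmul, hadd, hss, neg_mul, mul_neg, neg_neg,
          mul_add, add_mul, mul_sub, sub_mul, mul_assoc]
            try simp only [hpull, hpull1]
            try noncomm_ring
          rw [e] at h
          have h1 := (CC.split hprime Cs h).resolve_left hs0
          refine CC.half htor (CC.of_eq ?_ ((hQ x).sub h1))
          noncomm_ring
        have hν : ∀ u : R, CC (g₂ u - st u) := fun u => by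
          have h := hH (st u); rwa [hinv] at h
        by_contra hcon
        push_neg at hcon
        obtain ⟨x₀, y₀, hxy0⟩ := hcon
        have hnc : ¬ CC x₀ := fun h => hxy0 (h y₀)
        have stC : ∀ z : R, CC z → CC (st z) := by
          intro z hz r
          conv_lhs => rw [← hinv r]
          rw [← hmul, ← hz (st r), hmul, hinv]
        have hν2 : ∀ u : R, CC ((g₂ u - st u) * st u) := by
          intro u
          have hsl : g₂ u * st u = st u * g₂ u := by
            have h := (hν u) (st u)
            rw [sub_mul, mul_sub] at h
            exact sub_left_inj.mp h
          have e : g₂ (u * u) - st (u * u)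
              = ((g₂ u - st u) * st u + (g₂ u - st u) * st u) + (g₂ u - st u) * (g₂ u - st u) := by
            simp only [map_mul, hmul, sub_mul, mul_sub, hsl]
            noncomm_ring
          refine CC.half htor
            (CC.of_eq ?_ ((CC.of_eq e (hν (u * u))).sub ((hν u).mul (hν u))))
          noncomm_ring
        have hdisj : ∀ u : R, g₂ u - st u = 0 ∨ CC u := by
          intro u
          rcases CC.split hprime (hν u) (hν2 u) with h | h
          · exact Or.inl h
          · right
            have h2 := stC (st u) h
            rwa [hinv] at h2
        have h₀ : g₂ x₀ - st x₀ = 0 := (hdisj x₀).resolve_right hnc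
        rw [sub_eq_zero] at h₀
        have hall : ∀ w : R, g₂ w = st w := by
          intro w
          rcases hdisj w with h | hCw
          · exact sub_eq_zero.mp h
          · have hno : ¬ CC (w + x₀) := fun h =>
              hnc (CC.of_eq (add_sub_cancel_left w x₀) (h.sub hCw))
            have h1 : g₂ (w + x₀) - st (w + x₀) = 0 := (hdisj (w + x₀)).resolve_right hno
            rw [map_add, hadd, sub_eq_zero, h₀] at h1
            exact add_right_cancel h1
        have key : ∀ u v : R, st u * st v = st v * st u := by
          intro u v
          calc st u * st v = g₂ u * g₂ v := by rw [hall u, hall v]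
            _ = g₂ (u * v) := (map_mul g₂ u v).symm
            _ = st (u * v) := hall (u * v)
            _ = st v * st u := hmul u v
        have h2 := key (st x₀) (st y₀)
        rw [hinv x₀, hinv y₀] at h2
        exact hxy0 h2
    · -- g₁ s - g₂ s ≠ 0
      have hA1' : ∀ x : R, CC (-(g₁ x * g₁ s) + g₂ s * g₂ (st x) + s * x - st x * s) := by
        intro x
        have h := hA1 (x * (s * s))
        have e : -(g₁ (x * (s * s)) * g₂ s) + g₁ s * g₂ (st (x * (s * s)))
              + s * (x * (s * s)) - st (x * (s * s)) * s
            = s * (s * (-(g₁ x * g₁ s) + g₂ s * g₂ (st x) + s * x - st x * s)) := by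
          simp only [map_mul, map_add, map_neg, hmul, hadd, hss, neg_mul, mul_neg, neg_neg,
          mul_add, add_mul, mul_sub, sub_mul, mul_assoc, hab, hab']
          try simp only [hpull, hpull1]
          try noncomm_ring
        rw [e] at h
        have h1 := (CC.split hprime Cs h).resolve_left hs0
        exact (CC.split hprime Cs h1).resolve_left hs0
      have hGH : ∀ x : R, CC (g₁ x + g₂ (st x)) := by
        intro x
        have h := (hA1 x).sub (hA1' x)
        have e : -(g₁ x * g₂ s) + g₁ s * g₂ (st x) + s * x - st x * s
              - (-(g₁ x * g₁ s) + g₂ s * g₂ (st x) + s * x - st x * s)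
            = (g₁ s - g₂ s) * (g₁ x + g₂ (st x)) := by
          rw [mul_add, ← hd.pull1 (g₁ x)]
          noncomm_ring
        rw [e] at h
        exact (CC.split hprime hd h).resolve_left hd0
      have hplus : ∀ x : R, CC (x + st x) := by
        intro x
        refine CC.of_eq ?_ ((hGH x).sub (hQ x))
        noncomm_ring
      have hminus : ∀ x : R, CC (x - st x) := by
        intro x
        have h := hplus (x * s)
        have e : x * s + st (x * s) = s * (x - st x) := by
          simp only [map_mul, map_add, map_neg, hmul, hadd, hss, neg_mul, mul_neg, neg_neg,
          mul_add, add_mul, mul_sub, sub_mul, mul_assoc]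
          try simp only [hpull, hpull1]
          try noncomm_ring
        rw [e] at h
        exact (CC.split hprime Cs h).resolve_left hs0
      intro x y
      exact (CC.half htor (CC.of_eq (show (x + st x) + (x - st x) = x + x by noncomm_ring)
        ((hplus x).add (hminus x)))) y
  · -- main case : s * s - g₁ s * g₂ s ≠ 0
    have hGH : ∀ x : R, CC (g₁ x * g₂ (st x)) := fun x =>
      (CC.split hprime hFs (hKey x)).resolve_left hlam
    have hT : ∀ x : R, CC (st x * x) := fun x =>
      CC.of_eq (show g₁ x * g₂ (st x) - (g₁ x * g₂ (st x) - st x * x) = st x * x by noncomm_ring)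
        ((hGH x).sub (hF x))
    have hLin : ∀ x y : R, CC (st x * y + st y * x) := by
      intro x y
      refine CC.of_eq ?_ (((hT (x + y)).sub (hT x)).sub (hT y))
      rw [hadd]
      noncomm_ring
    have hLin2 : ∀ x y : R, CC (st x * y - st y * x) := by
      intro x y
      have h := hLin x (y * s)
      have e : st x * (y * s) + st (y * s) * x = s * (st x * y - st y * x) := by
        simp only [map_mul, map_add, map_neg, hmul, hadd, hss, neg_mul, mul_neg, neg_neg,
          mul_add, add_mul, mul_sub, sub_mul, mul_assoc]
        try simp only [hpull, hpull1]
        try noncomm_ring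
      rw [e] at h
      exact (CC.split hprime Cs h).resolve_left hs0
    have hxy : ∀ x y : R, CC (st x * y) := fun x y =>
      CC.half htor (CC.of_eq (show (st x * y + st y * x) + (st x * y - st y * x)
          = st x * y + st x * y by noncomm_ring) ((hLin x y).add (hLin2 x y)))
    intro x y
    have h : CC (s * x) := by
      have h' := hxy (st s) x
      rwa [hinv] at h'
    exact ((CC.split hprime Cs h).resolve_left hs0) y
end

section
/- Let R be a 2-torsion free prime ring with involution * of the second kind. If R admits nontrivial endomorphisms g₁, g₂ satisfying g₁(x)g₂(x*) + x*x ∈ Z(R) for all x ∈ R, then R is commutative. -/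
private def ctr {R : Type*} [Ring R] (a : R) : Prop := ∀ r : R, r * a = a * r

namespace ctr
variable {R : Type*} [Ring R]

private theorem add {a b : R} (ha : ctr a) (hb : ctr b) : ctr (a + b) := fun r => by
  rw [mul_add, add_mul, ha r, hb r]

private theorem neg' {a : R} (ha : ctr a) : ctr (-a) := fun r => by
  rw [mul_neg, neg_mul, ha r]

private theorem sub {a b : R} (ha : ctr a) (hb : ctr b) : ctr (a - b) := fun r => by
  rw [mul_sub, sub_mul, ha r, hb r]

private theorem mul {a b : R} (ha : ctr a) (hb : ctr b) : ctr (a * b) := fun r => by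
  rw [← mul_assoc, ha r, mul_assoc, hb r, ← mul_assoc]

private theorem of_eq {a b : R} (h : a = b) (ha : ctr a) : ctr b := h ▸ ha

private theorem half (htor : ∀ x : R, x + x = 0 → x = 0) {a : R} (h : ctr (a + a)) : ctr a := by
  intro r
  have h2 := h r
  rw [mul_add, add_mul] at h2
  exact sub_eq_zero.mp (htor _ (by rw [sub_add_sub_comm, h2, sub_self]))

end ctr

section helpers
variable {R : Type*} [Ring R]

private theorem comm_of_double (htor : ∀ x : R, x + x = 0 → x = 0) {a b : R}
    (h : a * (b + b) = (b + b) * a) : a * b = b * a := by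
  rw [mul_add, add_mul] at h
  exact sub_eq_zero.mp (htor _ (by rw [sub_add_sub_comm, h, sub_self]))

private theorem ctrL1 (hprime : ∀ a b : R, (∀ x : R, a * x * b = 0) → a = 0 ∨ b = 0)
    {z c : R} (hz : ctr z) (hz0 : z ≠ 0) (h : ctr (z * c)) : ctr c := by
  intro r
  have ha : z * (r * c) = r * (z * c) := by rw [← mul_assoc, ← hz r, mul_assoc]
  have h1 : z * (r * c - c * r) = 0 := by
    rw [mul_sub, ha, h r, ← mul_assoc, sub_self]
  have h3 : ∀ u : R, z * u * (r * c - c * r) = 0 := by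
    intro u
    rw [show z * u = u * z from (hz u).symm, mul_assoc, h1, mul_zero]
  rcases hprime z _ h3 with h4 | h4
  · exact absurd h4 hz0
  · exact sub_eq_zero.mp h4

private theorem ctrLz (hprime : ∀ a b : R, (∀ x : R, a * x * b = 0) → a = 0 ∨ b = 0)
    {z c : R} (hz : ctr z) (hz0 : z ≠ 0) (h : z * c = 0) : c = 0 := by
  rcases hprime z c (fun u => by
      rw [show z * u = u * z from (hz u).symm, mul_assoc, h, mul_zero]) with h1 | h1
  · exact absurd h1 hz0
  · exact h1

private theorem ctrComm (hprime : ∀ a b : R, (∀ x : R, a * x * b = 0) → a = 0 ∨ b = 0)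
    (htor : ∀ x : R, x + x = 0 → x = 0)
    (h : ∀ x y : R, ctr (x * y - y * x)) : ∀ x y : R, x * y = y * x := by
  intro x y
  have hc := h x y
  have h1 : ctr (x * (x * y - y * x) + x * (x * y - y * x)) := by
    apply ctr.of_eq _ (h (x * x) y)
    have e : x * x * y - y * (x * x) = x * (x * y - y * x) + (x * y - y * x) * x := by
      noncomm_ring
    rw [e, ← hc x]
  have h3 : ctr (x * (x * y - y * x)) := ctr.half htor h1
  have h4 : (x * y - y * x) * (x * y - y * x) = 0 := by
    have e2 : (x * y - y * x) * (x * y - y * x)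
        = x * (x * y - y * x) * y - y * (x * (x * y - y * x)) := by
      rw [mul_assoc x _ y, ← hc y, ← mul_assoc, ← mul_assoc, ← sub_mul]
    rw [e2, h3 y, sub_self]
  have h6 : ∀ u : R, (x * y - y * x) * u * (x * y - y * x) = 0 := by
    intro u
    rw [show (x * y - y * x) * u = u * (x * y - y * x) from (hc u).symm, mul_assoc, h4, mul_zero]
  rcases hprime _ _ h6 with h7 | h7 <;> exact sub_eq_zero.mp h7

end helpers
theorem stmt12 {R : Type*} [Ring R]
    (hprime : ∀ a b : R, (∀ x : R, a * x * b = 0) → a = 0 ∨ b = 0)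
    (htor : ∀ x : R, x + x = 0 → x = 0)
    (st : R → R)
    (hadd : ∀ x y : R, st (x + y) = st x + st y)
    (hmul : ∀ x y : R, st (x * y) = st y * st x)
    (hinv : ∀ x : R, st (st x) = x)
    (hsecond : ∃ s : R, s ≠ 0 ∧ st s = -s ∧ s ∈ Set.center R)
    (g₁ g₂ : R →+* R)
    (hg₁ : g₁ ≠ RingHom.id R)
    (hg₂ : g₂ ≠ RingHom.id R)
    (hyp : ∀ x : R, g₁ x * g₂ (st x) + st x * x ∈ Set.center R) :
    ∀ x y : R, x * y = y * x := by
  obtain ⟨s, hs0, hss, hsZmem⟩ := hsecond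
  have hsC : ctr s := fun r => Semigroup.mem_center_iff.mp hsZmem r
  have hF : ∀ x : R, ctr (g₁ x * g₂ (st x) + st x * x) :=
    fun x => fun r => Semigroup.mem_center_iff.mp (hyp x) r
  -- basic facts about st
  have st0 : st 0 = 0 := by
    have h := hadd 0 0
    rw [add_zero] at h
    exact (left_eq_add.mp h)
  have stneg : ∀ x : R, st (-x) = -st x := by
    intro x
    have h := hadd x (-x)
    rw [add_neg_cancel, st0] at h
    exact (eq_neg_of_add_eq_zero_right h.symm)
  have stsub : ∀ x y : R, st (x - y) = st x - st y := by
    intro x y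
    rw [sub_eq_add_neg, hadd, stneg, sub_eq_add_neg]
  have st1 : st 1 = 1 := by
    have h := hmul (st 1) 1
    rw [mul_one, hinv 1, mul_one] at h
    exact h.symm
  have hsts : ∀ x : R, st (x * s) = -(s * st x) := by
    intro x
    rw [hmul, hss, neg_mul]
  have hsts' : ∀ x : R, st (s * x) = -(s * st x) := by
    intro x
    rw [hmul, hss, mul_neg, hsC (st x)]
  -- linearized hypothesis
  have hFlin : ∀ x y : R, ctr (g₁ x * g₂ (st y) + g₁ y * g₂ (st x) + (st x * y + st y * x)) := by
    intro x y
    have h := (hF (x + y)).sub ((hF x).add (hF y))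
    apply ctr.of_eq _ h
    rw [hadd x y, map_add g₁, map_add g₂]
    noncomm_ring
  -- (M)
  have hM : ∀ x : R, ctr (g₁ x + g₂ (st x) + (st x + x)) := by
    intro x
    apply ctr.of_eq _ (hFlin x 1)
    rw [st1, map_one g₁, map_one g₂]
    noncomm_ring
  -- E := g₁ s - g₂ s is central
  have hE : ctr (g₁ s - g₂ s) := by
    apply ctr.of_eq _ (hM s)
    rw [hss, map_neg g₂ s]
    abel
  -- K := g₁ s * g₂ s is central
  have hK : ctr (g₁ s * g₂ s) := by
    have h0 : ctr (-(g₁ s * g₂ s + s * s)) := by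
      apply ctr.of_eq _ (hF s)
      rw [hss, map_neg g₂ s]
      noncomm_ring
    have h1 : ctr (g₁ s * g₂ s + s * s) := ctr.of_eq (neg_neg _) h0.neg'
    exact ctr.of_eq (add_sub_cancel_right _ _) (h1.sub (hsC.mul hsC))
  -- (H) : (g₁ s - g₂ s) * (g₁ x * g₂ (st x)) central
  have hH : ∀ x : R, ctr ((g₁ s - g₂ s) * (g₁ x * g₂ (st x))) := by
    intro x
    apply ctr.of_eq _ (hFlin x (x * s))
    rw [hsts x, map_neg g₂, map_mul g₂, map_mul g₁]
    rw [show st x * (x * s) = s * (st x * x) from by rw [← mul_assoc, hsC (st x * x)]]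
    rw [show (g₁ s - g₂ s) * (g₁ x * g₂ (st x)) = g₁ x * (g₁ s - g₂ s) * g₂ (st x) from by
      rw [← mul_assoc, ← hE (g₁ x)]]
    noncomm_ring
  -- (Z0) : (s*s - g₁ s * g₂ s) * (g₁ x * g₂ (st x)) central
  have hZ0 : ∀ x : R, ctr ((s * s - g₁ s * g₂ s) * (g₁ x * g₂ (st x))) := by
    intro x
    have h := (hF (x * s)).add ((hsC.mul hsC).mul (hF x))
    apply ctr.of_eq _ h
    rw [hsts x, map_neg g₂, map_mul g₂, map_mul g₁]
    rw [show -(s * st x) * (x * s) = -(s * s * (st x * x)) from by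
      rw [neg_mul, mul_assoc, show st x * (x * s) = s * (st x * x) from by
        rw [← mul_assoc, hsC (st x * x)], ← mul_assoc]]
    rw [sub_mul]
    rw [show (g₁ s * g₂ s) * (g₁ x * g₂ (st x)) = g₁ x * (g₁ s * g₂ s) * g₂ (st x) from by
      rw [← mul_assoc, ← hK (g₁ x)]]
    noncomm_ring
  -- key lemma: if st x * x is always central, then commutative
  have KL : (∀ x : R, ctr (st x * x)) → ∀ x y : R, x * y = y * x := by
    intro h
    have hlin : ∀ x y : R, ctr (st x * y + st y * x) := by
      intro x y
      apply ctr.of_eq _ ((h (x + y)).sub ((h x).add (h y)))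
      rw [hadd x y]
      noncomm_ring
    have h1 : ∀ x : R, ctr (st x + x) := by
      intro x
      apply ctr.of_eq _ (hlin x 1)
      rw [st1]
      noncomm_ring
    have h2 : ∀ x : R, ctr (st x - x) := by
      intro x
      apply ctrL1 hprime hsC hs0
      apply ctr.of_eq _ (hlin x s)
      rw [hss, hsC (st x)]
      noncomm_ring
    intro x y
    have h5 : ctr x := ctr.half htor (ctr.of_eq (by abel) ((h1 x).sub (h2 x)))
    exact (h5 y).symm
  -- main case analysis
  rcases eq_or_ne (g₁ s - g₂ s) 0 with hEz | hEz
  swap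
  · -- E ≠ 0 : done
    have hAB : ∀ x : R, ctr (g₁ x * g₂ (st x)) := fun x => ctrL1 hprime hE hEz (hH x)
    exact KL (fun x => ctr.of_eq (add_sub_cancel_left _ _) ((hF x).sub (hAB x)))
  have hts : g₁ s = g₂ s := sub_eq_zero.mp hEz
  rcases eq_or_ne (s * s - g₁ s * g₂ s) 0 with hZz | hZz
  swap
  · -- Z0 ≠ 0 : done
    have hz0C : ctr (s * s - g₁ s * g₂ s) := (hsC.mul hsC).sub hK
    have hAB : ∀ x : R, ctr (g₁ x * g₂ (st x)) := fun x => ctrL1 hprime hz0C hZz (hZ0 x)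
    exact KL (fun x => ctr.of_eq (add_sub_cancel_left _ _) ((hF x).sub (hAB x)))
  -- now t := g₁ s = g₂ s and t * t = s * s
  have hK2 : g₁ s * g₁ s = s * s := by
    nth_rewrite 2 [hts]
    exact (sub_eq_zero.mp hZz).symm
  -- t commutes with the image of g₁ and g₂
  have ct1 : ∀ z : R, g₁ s * g₁ z = g₁ z * g₁ s := by
    intro z
    rw [← map_mul, ← map_mul, hsC z]
  have ct2 : ∀ z : R, g₁ s * g₂ z = g₂ z * g₁ s := by
    intro z
    rw [hts, ← map_mul, ← map_mul, hsC z]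
  -- t commutes with st x + x
  have ctM : ∀ x : R, g₁ s * (st x + x) = (st x + x) * g₁ s := by
    intro x
    have h := hM x (g₁ s)
    have h2 : g₁ s * (g₁ x + g₂ (st x)) + g₁ s * (st x + x)
        = (g₁ x + g₂ (st x)) * g₁ s + (st x + x) * g₁ s := by
      rw [← mul_add, h, add_mul]
    have h3 : (g₁ x + g₂ (st x)) * g₁ s = g₁ s * (g₁ x + g₂ (st x)) := by
      rw [add_mul, mul_add, ct1 x, ct2 (st x)]
    rw [h3] at h2
    exact add_left_cancel h2
  -- t commutes with symmetric elements
  have ctu : ∀ x : R, st x = x → g₁ s * x = x * g₁ s := by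
    intro x hx
    have h := ctM x
    rw [hx] at h
    exact comm_of_double htor h
  -- t commutes with skew elements
  have cth : ∀ x : R, st x = -x → g₁ s * x = x * g₁ s := by
    intro x hx
    have hsx : st (s * x) = s * x := by
      rw [hmul, hx, hss, neg_mul_neg, hsC x]
    have h := ctu (s * x) hsx
    have h2 : s * (g₁ s * x - x * g₁ s) = 0 := by
      rw [mul_sub, show s * (g₁ s * x) = g₁ s * (s * x) from by
        rw [← mul_assoc, ← hsC (g₁ s), mul_assoc],
        show s * (x * g₁ s) = (s * x) * g₁ s from (mul_assoc s x (g₁ s)).symm, h, sub_self]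
    exact sub_eq_zero.mp (ctrLz hprime hsC hs0 h2)
  -- t is central
  have ctC : ctr (g₁ s) := by
    intro r
    have hu : st (r + st r) = r + st r := by
      rw [hadd, hinv, add_comm]
    have hh : st (r - st r) = -(r - st r) := by
      rw [stsub, hinv]
      exact (neg_sub r (st r)).symm
    have h1 := ctu _ hu
    have h2 := cth _ hh
    have e : (r + st r) + (r - st r) = r + r := by abel
    have h3 : g₁ s * (r + r) = (r + r) * g₁ s := by
      calc g₁ s * (r + r) = g₁ s * (r + st r) + g₁ s * (r - st r) := by rw [← mul_add, e]
        _ = (r + st r) * g₁ s + (r - st r) * g₁ s := by rw [h1, h2]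
        _ = (r + r) * g₁ s := by rw [← add_mul, e]
    exact (comm_of_double htor h3).symm
  -- dichotomy: g₁ s = s or g₁ s = -s
  have hcd : ctr (g₁ s - s) := ctC.sub hsC
  have hprod : (g₁ s - s) * (g₁ s + s) = 0 := by
    have e : (g₁ s - s) * (g₁ s + s) = g₁ s * g₁ s - s * s + (g₁ s * s - s * g₁ s) := by
      noncomm_ring
    rw [e, hK2, hsC (g₁ s)]
    abel
  have hdich : g₁ s - s = 0 ∨ g₁ s + s = 0 := by
    apply hprime
    intro u
    rw [show (g₁ s - s) * u = u * (g₁ s - s) from (hcd u).symm, mul_assoc, hprod, mul_zero]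
  rcases hdich with hcase | hcase
  · -- case t = s
    have hg1s : g₁ s = s := sub_eq_zero.mp hcase
    have hg2s : g₂ s = s := by rw [← hts]; exact hg1s
    have hA1 : ∀ x : R, ctr (g₁ x + x) := by
      intro x
      apply ctrL1 hprime hsC hs0
      apply ctr.half htor
      apply ctr.of_eq _ ((hsC.mul (hM x)).sub (hFlin x s))
      rw [hss, map_neg g₂ s, hg1s, hg2s, mul_neg, hsC (g₁ x), hsC (st x)]
      noncomm_ring
    have hrel : ∀ a r : R, r * g₁ a = g₁ a * r + (a * r - r * a) := by
      intro a r
      have h := hA1 a r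
      rw [mul_add, add_mul] at h
      calc r * g₁ a = r * g₁ a + r * a - r * a := by abel
        _ = g₁ a * r + a * r - r * a := by rw [h]
        _ = g₁ a * r + (a * r - r * a) := by abel
    have hfix : ∀ x y : R, g₁ (x * y - y * x) = x * y - y * x := by
      intro x y
      rw [map_sub, map_mul, map_mul]
      calc g₁ x * g₁ y - g₁ y * g₁ x = y * g₁ x - g₁ x * y := by rw [hrel y (g₁ x)]; abel
        _ = x * y - y * x := by rw [hrel x y]; abel
    refine ctrComm hprime htor (fun x y => ctr.half htor ?_)
    have h := hA1 (x * y - y * x)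
    rwa [hfix x y] at h
  · -- case t = -s
    have hg1s : g₁ s = -s := eq_neg_of_add_eq_zero_left hcase
    have hg2s : g₂ s = -s := by rw [← hts]; exact hg1s
    -- hq0 : g₂ (st x) + x central ; hp : g₁ x + st x central
    have hq0 : ∀ x : R, ctr (g₂ (st x) + x) := by
      intro x
      apply ctrL1 hprime hsC hs0
      apply ctr.half htor
      apply ctr.of_eq _ ((hsC.mul (hM x)).sub (hFlin x s))
      rw [hss, map_neg g₂ s, hg1s, hg2s, neg_neg, hsC (g₁ x), hsC (st x)]
      noncomm_ring
    have hp : ∀ x : R, ctr (g₁ x + st x) := by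
      intro x
      apply ctrL1 hprime hsC hs0
      apply ctr.half htor
      apply ctr.of_eq _ ((hsC.mul (hM x)).add (hFlin x s))
      rw [hss, map_neg g₂ s, hg1s, hg2s, neg_neg, hsC (g₁ x), hsC (st x)]
      noncomm_ring
    have hq : ∀ x : R, ctr (g₂ x + st x) := by
      intro x
      have h := hq0 (st x)
      rwa [hinv x] at h
    have hf : ∀ x : R, ctr (g₁ x - g₂ x) := by
      intro x
      exact ctr.of_eq (by abel) ((hp x).sub (hq x))
    -- f(x) * st x is central
    have hfs : ∀ x : R, ctr ((g₁ x - g₂ x) * st x) := by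
      intro x
      have hcx1 : st x * g₁ x = g₁ x * st x := by
        have h := hp x (st x)
        rw [mul_add, add_mul] at h
        exact add_right_cancel h
      have hcx2 : st x * g₂ x = g₂ x * st x := by
        have h := hq x (st x)
        rw [mul_add, add_mul] at h
        exact add_right_cancel h
      apply ctr.half htor
      have hbig : ctr (((g₁ x + st x) * (g₁ x + st x) - (g₂ x + st x) * (g₂ x + st x))
          - (g₁ (x * x) - g₂ (x * x))) :=
        (((hp x).mul (hp x)).sub ((hq x).mul (hq x))).sub (hf (x * x))
      apply ctr.of_eq _ hbig
      rw [map_mul, map_mul]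
      rw [show (g₁ x + st x) * (g₁ x + st x) - (g₂ x + st x) * (g₂ x + st x)
          = (g₁ x * g₁ x - g₂ x * g₂ x) + ((g₁ x - g₂ x) * st x + (st x * g₁ x - st x * g₂ x))
          from by noncomm_ring]
      rw [hcx1, hcx2]
      noncomm_ring
    -- Brauer trick : either all st x central (⇒ done) or g₁ = g₂
    by_cases hallZ : ∀ z : R, ctr (st z)
    · intro x y
      have hx : ctr x := by
        have h := hallZ (st x)
        rwa [hinv] at h
      exact (hx y).symm
    · push_neg at hallZ
      obtain ⟨v, hv⟩ := hallZ
      have hfv : g₁ v - g₂ v = 0 := by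
        by_contra hne
        exact hv (ctrL1 hprime (hf v) hne (hfs v))
      have hfall : ∀ u : R, g₁ u = g₂ u := by
        intro u
        by_contra hne0
        have hne : g₁ u - g₂ u ≠ 0 := sub_ne_zero.mpr hne0
        have hstu : ctr (st u) := ctrL1 hprime (hf u) hne (hfs u)
        have huv : g₁ (u + v) - g₂ (u + v) = g₁ u - g₂ u := by
          rw [map_add, map_add]
          rw [show g₁ u + g₁ v - (g₂ u + g₂ v) = (g₁ u - g₂ u) + (g₁ v - g₂ v) from by abel,
            hfv, add_zero]
        have hstuv : ctr (st (u + v)) := by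
          apply ctrL1 hprime (hf (u + v)) _ (hfs (u + v))
          rw [huv]; exact hne
        apply hv
        rw [hadd] at hstuv
        exact ctr.of_eq (add_sub_cancel_left _ _) (hstuv.sub hstu)
      -- now g₁ = g₂, derive [st x, x] central
      have hVV : ∀ x : R, ctr (st x * x - x * st x) := by
        intro x
        have hFx : ctr (g₁ x * g₁ (st x) + st x * x) := by
          have h := hF x
          rwa [← hfall (st x)] at h
        have hz : st (x * st x) = x * st x := by
          rw [hmul, hinv]
        have hCC : ctr (g₁ x * g₁ (st x) + x * st x) := by
          have h := hp (x * st x)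
          rw [hz, map_mul] at h
          exact h
        exact ctr.of_eq (by abel) (hFx.sub hCC)
      have hVVl : ∀ x y : R, ctr (st x * y + st y * x - x * st y - y * st x) := by
        intro x y
        apply ctr.of_eq _ ((hVV (x + y)).sub ((hVV x).add (hVV y)))
        rw [hadd x y]
        noncomm_ring
      have hVV2 : ∀ x z : R, ctr (st x * z - st z * x + x * st z - z * st x) := by
        intro x z
        apply ctrL1 hprime hsC hs0
        apply ctr.of_eq _ (hVVl x (s * z))
        rw [hsts' z, mul_neg, neg_mul]
        rw [show st x * (s * z) = s * (st x * z) from by rw [← mul_assoc, hsC (st x), mul_assoc]]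
        rw [show x * (s * st z) = s * (x * st z) from by rw [← mul_assoc, hsC x, mul_assoc]]
        noncomm_ring
    -- combine
      refine ctrComm hprime htor (fun u z => ctr.half htor ?_)
      have h1 := hVVl (st u) z
      rw [hinv u] at h1
      have h2 := hVV2 (st u) z
      rw [hinv u] at h2
      exact ctr.of_eq (by abel) (h1.add h2)
end

section
/- Let R be a 2-torsion free prime ring with involution * of the second kind. If x - x* ∈ Z(R) for all x ∈ R, then R is commutative. -/
theorem stmt13 {R : Type*} [Ring R]
    (hprime : ∀ a b : R, (∀ x : R, a * x * b = 0) → a = 0 ∨ b = 0)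
    (htor : ∀ x : R, x + x = 0 → x = 0)
    (st : R → R)
    (hadd : ∀ x y : R, st (x + y) = st x + st y)
    (hmul : ∀ x y : R, st (x * y) = st y * st x)
    (hinv : ∀ x : R, st (st x) = x)
    (hsecond : ∃ s : R, s ≠ 0 ∧ st s = -s ∧ s ∈ Set.center R)
    (hyp : ∀ x : R, x - st x ∈ Set.center R) :
    ∀ x y : R, x * y = y * x := by
  obtain ⟨s, hs0, hss, hsc⟩ := hsecond
  have hs : ∀ b : R, s * b = b * s := fun b => (Semigroup.mem_center_iff.mp hsc b).symm
  have hminus : ∀ r b : R, (r - st r) * b = b * (r - st r) := fun r b =>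
    (Semigroup.mem_center_iff.mp (hyp r) b).symm
  have hplus : ∀ r b : R, (r + st r) * b = b * (r + st r) := by
    intro r b
    have h1 : s * r - st (s * r) = s * (r + st r) := by
      rw [hmul, hss, mul_neg, sub_neg_eq_add, mul_add, hs (st r)]
    have hcen : ∀ z : R, (s * (r + st r)) * z = z * (s * (r + st r)) := by
      intro z
      have := hminus (s * r) z
      rw [h1] at this
      exact this
    have hzero : s * ((r + st r) * b - b * (r + st r)) = 0 := by
      have e1 : s * ((r + st r) * b - b * (r + st r))
          = (s * (r + st r)) * b - b * (s * (r + st r)) := by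
        rw [mul_sub, ← mul_assoc, ← mul_assoc, hs b, mul_assoc b s]
      rw [e1, hcen b, sub_self]
    have hall : ∀ z : R, s * z * ((r + st r) * b - b * (r + st r)) = 0 := by
      intro z
      calc s * z * ((r + st r) * b - b * (r + st r))
          = z * (s * ((r + st r) * b - b * (r + st r))) := by rw [← mul_assoc, hs z]
        _ = 0 := by rw [hzero, mul_zero]
    rcases hprime s _ hall with h | h
    · exact absurd h hs0
    · exact sub_eq_zero.mp h
  intro x y
  have h1 := hplus x y
  have h2 := hminus x y
  have key : x * y + x * y = y * x + y * x := by
    have e : (x + st x + (x - st x)) * y = y * (x + st x + (x - st x)) := by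
      rw [add_mul, mul_add, h1, h2]
    have e2 : x + st x + (x - st x) = x + x := by abel
    rw [e2, add_mul, mul_add] at e
    exact e
  have h3 : (x * y - y * x) + (x * y - y * x) = 0 := by
    calc (x * y - y * x) + (x * y - y * x)
        = (x * y + x * y) - (y * x + y * x) := by abel
      _ = 0 := by rw [key, sub_self]
  exact sub_eq_zero.mp (htor _ h3)
end

section
/- Let R be a 2-torsion free prime ring with involution * of the second kind. If (x - x*)² ∈ Z(R) for all x ∈ R, then R is commutative. -/
theorem stmt14 {R : Type*} [Ring R]
    (hprime : ∀ a b : R, (∀ x : R, a * x * b = 0) → a = 0 ∨ b = 0)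
    (htor : ∀ x : R, x + x = 0 → x = 0)
    (st : R → R)
    (hadd : ∀ x y : R, st (x + y) = st x + st y)
    (hmul : ∀ x y : R, st (x * y) = st y * st x)
    (hinv : ∀ x : R, st (st x) = x)
    (hsecond : ∃ s : R, s ≠ 0 ∧ st s = -s ∧ s ∈ Set.center R)
    (hyp : ∀ x : R, (x - st x) ^ 2 ∈ Set.center R) :
    ∀ x y : R, x * y = y * x := by
  obtain ⟨s, hs0, hss, hsc⟩ := hsecond
  have hcs : ∀ r : R, s * r = r * s := fun r => (Semigroup.mem_center_iff.mp hsc r).symm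
  have hypC : ∀ x : R, ∀ r : R, ((x - st x) * (x - st x)) * r = r * ((x - st x) * (x - st x)) := by
    intro x r
    have := Semigroup.mem_center_iff.mp (hyp x) r
    rw [pow_two] at this
    exact this.symm
  have cancel : ∀ c : R, c ≠ 0 → (∀ r, c * r = r * c) →
      ∀ z : R, (∀ r, (c * z) * r = r * (c * z)) → ∀ r, z * r = r * z := by
    intro c hc hcc z hcz r
    have e : c * (z * r - r * z) = 0 := by
      have h1 : c * (z * r) = (c * z) * r := by rw [mul_assoc]
      have h2 : c * (r * z) = (c * z) * r := by
        rw [← mul_assoc, hcc r, mul_assoc, ← hcz r, mul_assoc]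
      rw [mul_sub, h1, h2, sub_self]
    have h3 : ∀ t : R, c * t * (z * r - r * z) = 0 := by
      intro t
      rw [hcc t, mul_assoc, e, mul_zero]
    rcases hprime c (z * r - r * z) h3 with h | h
    · exact absurd h hc
    · exact sub_eq_zero.mp h
  have cancel2 : ∀ z : R, (∀ r, (z + z) * r = r * (z + z)) → ∀ r, z * r = r * z := by
    intro z h r
    have h2 : z * r + z * r = r * z + r * z := by
      have := h r
      rw [add_mul, mul_add] at this
      exact this
    have : (z * r - r * z) + (z * r - r * z) = 0 := by
      rw [sub_add_sub_comm, h2, sub_self]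
    exact sub_eq_zero.mp (htor _ this)
  have hs2c : ∀ r : R, (s * s) * r = r * (s * s) := by
    intro r
    rw [mul_assoc, hcs r, ← mul_assoc, hcs r, mul_assoc]
  have hs2 : s * s ≠ 0 := by
    intro h
    apply hs0
    rcases hprime s s (fun x => by rw [hcs x, mul_assoc, h, mul_zero]) with h' | h' <;> exact h'
  have hstsx : ∀ x : R, st (s * x) = -(s * st x) := by
    intro x
    rw [hmul, hss, mul_neg, hcs (st x)]
  have sqadd : ∀ a b : R, (a + b) * (a + b) = a * a + (a * b + b * a) + b * b := by
    intro a b; noncomm_ring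
  -- Step A : (x + st x)^2 is central
  have hH : ∀ x : R, ∀ r : R, ((x + st x) * (x + st x)) * r = r * ((x + st x) * (x + st x)) := by
    intro x
    have key : s * x - st (s * x) = s * (x + st x) := by
      rw [hstsx, sub_neg_eq_add, mul_add]
    have e2 : (s * x - st (s * x)) * (s * x - st (s * x)) = (s * s) * ((x + st x) * (x + st x)) := by
      rw [key]
      rw [mul_assoc s (x + st x) (s * (x + st x)), ← mul_assoc (x + st x) s (x + st x),
        ← hcs (x + st x), mul_assoc s (x + st x), ← mul_assoc s s, ← mul_assoc]
    apply cancel (s * s) hs2 hs2c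
    intro r
    have := hypC (s * x) r
    rw [e2] at this
    exact this
  have cenSub : ∀ a b : R, (∀ r, a * r = r * a) → (∀ r, b * r = r * b) →
      ∀ r, (a - b) * r = r * (a - b) := by
    intro a b ha hb r
    rw [sub_mul, mul_sub, ha r, hb r]
  have cenAdd : ∀ a b : R, (∀ r, a * r = r * a) → (∀ r, b * r = r * b) →
      ∀ r, (a + b) * r = r * (a + b) := by
    intro a b ha hb r
    rw [add_mul, mul_add, ha r, hb r]
  have cenMul : ∀ a b : R, (∀ r, a * r = r * a) → (∀ r, b * r = r * b) →
      ∀ r, (a * b) * r = r * (a * b) := by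
    intro a b ha hb r
    rw [mul_assoc, hb r, ← mul_assoc, ha r, mul_assoc]
  -- Step B : k*h + h*k central, where k = x - st x, h = x + st x
  have hM : ∀ x : R, ∀ r : R,
      ((x - st x) * (x + st x) + (x + st x) * (x - st x)) * r
        = r * ((x - st x) * (x + st x) + (x + st x) * (x - st x)) := by
    intro x
    have key : (x + s * x) - st (x + s * x) = (x - st x) + s * (x + st x) := by
      rw [hadd, hstsx]
      noncomm_ring
    have e1 : (x - st x) * (s * (x + st x)) = s * ((x - st x) * (x + st x)) := by
      rw [← mul_assoc, ← hcs (x - st x), mul_assoc]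
    have e2 : (s * (x + st x)) * (x - st x) = s * ((x + st x) * (x - st x)) := by
      rw [mul_assoc]
    have e3 : (s * (x + st x)) * (s * (x + st x)) = (s * s) * ((x + st x) * (x + st x)) := by
      rw [mul_assoc s (x + st x) (s * (x + st x)), ← mul_assoc (x + st x) s (x + st x),
        ← hcs (x + st x), mul_assoc s (x + st x), ← mul_assoc s s, ← mul_assoc]
    have expand : ((x - st x) + s * (x + st x)) * ((x - st x) + s * (x + st x))
        = (x - st x) * (x - st x)
          + s * ((x - st x) * (x + st x) + (x + st x) * (x - st x))
          + (s * s) * ((x + st x) * (x + st x)) := by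
      rw [sqadd, e1, e2, e3, ← mul_add]
    have hbig : ∀ r : R,
        ((x - st x) * (x - st x)
          + s * ((x - st x) * (x + st x) + (x + st x) * (x - st x))
          + (s * s) * ((x + st x) * (x + st x))) * r
        = r * ((x - st x) * (x - st x)
          + s * ((x - st x) * (x + st x) + (x + st x) * (x - st x))
          + (s * s) * ((x + st x) * (x + st x))) := by
      intro r
      have := hypC (x + s * x) r
      rw [key, expand] at this
      exact this
    apply cancel s hs0 hcs
    have e4 : s * ((x - st x) * (x + st x) + (x + st x) * (x - st x))
        = ((x - st x) * (x - st x)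
          + s * ((x - st x) * (x + st x) + (x + st x) * (x - st x))
          + (s * s) * ((x + st x) * (x + st x)))
          - (x - st x) * (x - st x) - (s * s) * ((x + st x) * (x + st x)) := by
      abel
    rw [e4]
    exact cenSub _ _ (cenSub _ _ hbig (hypC x)) (cenMul _ _ hs2c (hH x))
  -- Step C : x*x central
  have hx2 : ∀ x : R, ∀ r : R, (x * x) * r = r * (x * x) := by
    intro x
    apply cancel2
    apply cancel2
    intro r
    have key : (x * x + x * x) + (x * x + x * x)
        = (x - st x) * (x - st x)
          + ((x - st x) * (x + st x) + (x + st x) * (x - st x))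
          + (x + st x) * (x + st x) := by noncomm_ring
    rw [key]
    exact cenAdd _ _ (cenAdd _ _ (hypC x) (hM x)) (hH x) r
  -- Step D : xy + yx central
  have hlin : ∀ x y : R, ∀ r : R, (x * y + y * x) * r = r * (x * y + y * x) := by
    intro x y
    have key : x * y + y * x = (x + y) * (x + y) - x * x - y * y := by noncomm_ring
    rw [key]
    exact cenSub _ _ (cenSub _ _ (hx2 (x + y)) (hx2 x)) (hx2 y)
  -- Final argument
  intro x y
  by_contra hxy
  have hcu : ∀ r : R, (x + x) * r = r * (x + x) := by
    intro r
    have := hlin x 1 r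
    simpa using this
  have hcxu : ∀ r : R, (x * (x + x)) * r = r * (x * (x + x)) := by
    have e : x * (x + x) = x * x + x * x := by rw [mul_add]
    rw [e]
    exact cenAdd _ _ (hx2 x) (hx2 x)
  have key : ∀ z : R, (x * z - z * x) * (x + x) = 0 := by
    intro z
    have e1 : (x * z) * (x + x) = z * (x * (x + x)) := by
      rw [mul_assoc, ← hcu z, ← mul_assoc, hcxu z]
    have e3 : (z * x) * (x + x) = z * (x * (x + x)) := by rw [mul_assoc]
    rw [sub_mul, e1, e3, sub_self]
  have key2 : ∀ r : R, (x * y - y * x) * r * (x + x) = 0 := by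
    intro r
    rw [mul_assoc, ← hcu r, ← mul_assoc, key y, zero_mul]
  rcases hprime (x * y - y * x) (x + x) key2 with h | h
  · exact hxy (sub_eq_zero.mp h)
  · have hx0 : x = 0 := htor x h
    apply hxy
    rw [hx0, zero_mul, mul_zero]
end

section
/- In the ring R = M₂(ℚ) of 2×2 rational matrices, the map * sending (a b; c d) to (d -b; -c a) is an involution of the first kind (i.e., Z(R) ⊆ H(R)), the map g sending (a b; c d) to (a -b; -c d) is a ring endomorphism not equal to the identity, and g(x)g(x*) - xx* ∈ Z(R) for all x ∈ R, yet R is not commutative. -/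
theorem stmt17 :
    ∃ (st g : Matrix (Fin 2) (Fin 2) ℚ → Matrix (Fin 2) (Fin 2) ℚ),
      (∀ M : Matrix (Fin 2) (Fin 2) ℚ, st M = !![M 1 1, -M 0 1; -M 1 0, M 0 0]) ∧
      (∀ M : Matrix (Fin 2) (Fin 2) ℚ, g M = !![M 0 0, -M 0 1; -M 1 0, M 1 1]) ∧
      (∀ x y : Matrix (Fin 2) (Fin 2) ℚ, st (x + y) = st x + st y) ∧
      (∀ x y : Matrix (Fin 2) (Fin 2) ℚ, st (x * y) = st y * st x) ∧
      (∀ x : Matrix (Fin 2) (Fin 2) ℚ, st (st x) = x) ∧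
      (∀ z : Matrix (Fin 2) (Fin 2) ℚ, z ∈ Set.center (Matrix (Fin 2) (Fin 2) ℚ) → st z = z) ∧
      (∀ x y : Matrix (Fin 2) (Fin 2) ℚ, g (x + y) = g x + g y) ∧
      (∀ x y : Matrix (Fin 2) (Fin 2) ℚ, g (x * y) = g x * g y) ∧
      g ≠ id ∧
      (∀ x : Matrix (Fin 2) (Fin 2) ℚ,
        g x * g (st x) - x * st x ∈ Set.center (Matrix (Fin 2) (Fin 2) ℚ)) ∧
      ¬ (∀ x y : Matrix (Fin 2) (Fin 2) ℚ, x * y = y * x) := by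
  refine ⟨fun M => !![M 1 1, -M 0 1; -M 1 0, M 0 0],
          fun M => !![M 0 0, -M 0 1; -M 1 0, M 1 1],
          fun M => rfl, fun M => rfl, ?_, ?_, ?_, ?_, ?_, ?_, ?_, ?_, ?_⟩
  · intro x y
    ext i j
    fin_cases i <;> fin_cases j <;> simp [Matrix.add_apply] <;> ring
  · intro x y
    ext i j
    fin_cases i <;> fin_cases j <;>
      simp [Matrix.mul_apply, Fin.sum_univ_two] <;> ring
  · intro x
    ext i j
    fin_cases i <;> fin_cases j <;> simp
  · intro z hz
    rw [Set.mem_center_iff] at hz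
    have h1 := hz.comm !![0,1;0,0]
    have h2 := hz.comm !![0,0;1,0]
    have e1 := congrFun (congrFun h1 0 : _) 0
    have e2 := congrFun (congrFun h1 0 : _) 1
    have e3 := congrFun (congrFun h2 0 : _) 0
    have e4 := congrFun (congrFun h2 1 : _) 1
    simp [Matrix.mul_apply, Fin.sum_univ_two] at e1 e2 e3 e4
    ext i j
    fin_cases i <;> fin_cases j <;> simp [e1, e2, e3, e4] <;> linarith
  · intro x y
    ext i j
    fin_cases i <;> fin_cases j <;> simp [Matrix.add_apply] <;> ring
  · intro x y
    ext i j
    fin_cases i <;> fin_cases j <;>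
      simp [Matrix.mul_apply, Fin.sum_univ_two] <;> ring
  · intro h
    have := congrFun (congrFun (congrFun h !![0,1;0,0]) 0) 1
    norm_num at this
  · intro x
    have h0 : ∀ A : Matrix (Fin 2) (Fin 2) ℚ, A = 0 →
        A ∈ Set.center (Matrix (Fin 2) (Fin 2) ℚ) := fun A hA =>
      hA ▸ Set.zero_mem_center
    apply h0
    ext i j
    fin_cases i <;> fin_cases j <;>
      simp [Matrix.mul_apply, Matrix.sub_apply, Fin.sum_univ_two] <;> ring
  · intro h
    have := congrFun (congrFun (h !![0,1;0,0] !![0,0;1,0]) 0) 0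
    simp [Matrix.mul_apply, Fin.sum_univ_two] at this
end
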